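/- arXiv:2005.01998 — 4 statements merged into one kernel-verified Lean document; each statement's English description precedes it below -/
import Mathlib

section
/- Let Φ = (G, 𝕋, φ) be a complex unit gain graph whose underlying graph G has no isolated vertices. If 𝓔(Φ) = 2μ(G), then G has a perfect matching. -/
open Matrix

variable {V : Type*}

/-- A gain function on `G` with values in the circle group `𝕋 ⊆ ℂ`:
each ordered pair of adjacent vertices gets a unit complex number, and
reversing the pair inverts the gain. -/
structure IsGain (G : SimpleGraph V) (φ : V → V → ℂ) : Prop where
  unit : ∀ u v, G.Adj u v → ‖φ u v‖ = 1
  inv : ∀ u v, G.Adj u v → φ v u = (φ u v)⁻¹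

/-- The adjacency matrix of the complex unit gain graph `(G, 𝕋, φ)`. -/
noncomputable def gainAdj (G : SimpleGraph V) (φ : V → V → ℂ) : Matrix V V ℂ :=
  fun u v => @ite _ (G.Adj u v) (Classical.dec _) (φ u v) 0

theorem IsGain.isHermitian {G : SimpleGraph V} {φ : V → V → ℂ} (hg : IsGain G φ) :
    (gainAdj G φ).IsHermitian := by
  ext u v
  simp only [conjTranspose_apply, gainAdj]
  by_cases h : G.Adj u v
  · rw [if_pos h.symm, if_pos h, hg.inv u v h, Complex.inv_eq_conj (hg.unit u v h)]
    simp
  · rw [if_neg (fun h' => h h'.symm), if_neg h]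
    simp

/-- The energy of a complex unit gain graph: the sum of the absolute values of the
eigenvalues of its (Hermitian) adjacency matrix. -/
noncomputable def gainEnergy [Fintype V] [DecidableEq V] (G : SimpleGraph V) (φ : V → V → ℂ)
    (hg : IsGain G φ) : ℝ :=
  ∑ i, |hg.isHermitian.eigenvalues i|

/-- `M` is a matching of `G`: a set of edges of `G`, pairwise sharing no vertex. -/
def IsGraphMatching (G : SimpleGraph V) (M : Finset (Sym2 V)) : Prop :=
  (↑M : Set (Sym2 V)) ⊆ G.edgeSet ∧
    ∀ e ∈ M, ∀ f ∈ M, e ≠ f → ∀ v : V, v ∈ e → v ∉ f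

/-- The matching number of `G`: the largest size of a matching. -/
noncomputable def matchingNumber (G : SimpleGraph V) : ℕ :=
  sSup {n | ∃ M : Finset (Sym2 V), IsGraphMatching G M ∧ M.card = n}

/-- The gain of a walk: the product of the gains along its darts. -/
def walkGain {G : SimpleGraph V} (φ : V → V → ℂ) {u v : V} (w : G.Walk u v) : ℂ :=
  (w.darts.map fun d => φ d.toProd.1 d.toProd.2).prod

/-- A complex unit gain graph is balanced if every cycle has gain `1`. -/
def IsBalanced (G : SimpleGraph V) (φ : V → V → ℂ) : Prop :=
  ∀ (v : V) (w : G.Walk v v), w.IsCycle → walkGain φ w = 1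

theorem IsGain.anti {G H : SimpleGraph V} {φ : V → V → ℂ} (hg : IsGain G φ) (hle : H ≤ G) :
    IsGain H φ :=
  ⟨fun u v h => hg.unit u v (hle h), fun u v h => hg.inv u v (hle h)⟩

theorem IsGain.induce {G : SimpleGraph V} {φ : V → V → ℂ} (hg : IsGain G φ) (s : Set V) :
    IsGain (G.induce s) (fun a b => φ a b) :=
  ⟨fun u v h => hg.unit u v h, fun u v h => hg.inv u v h⟩


/-! ### Auxiliary lemmas -/

lemma trace_mul_std {n : Type*} [Fintype n] [DecidableEq n] (A : Matrix n n ℂ) (i j : n) (c : ℂ) :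
    (A * Matrix.single i j c).trace = A j i * c := by
  simp [Matrix.trace, Matrix.diag, Matrix.mul_apply, Matrix.single, Finset.sum_ite_eq,
    Finset.sum_ite_eq', ite_and]

lemma qf_std {n : Type*} [Fintype n] [DecidableEq n] (x : n → ℂ) (i j : n) (c : ℂ) :
    star x ⬝ᵥ (Matrix.single i j c) *ᵥ x = (starRingEnd ℂ) (x i) * (c * x j) := by
  simp [Matrix.mulVec, dotProduct, Matrix.single, ite_and, Finset.mul_sum,
    Finset.sum_ite_eq, Finset.sum_ite_eq', Pi.star_apply, mul_assoc]

/-- duality: the real part of `trace (A * B)` is at most the sum of the absolute values of the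
eigenvalues of the Hermitian matrix `A`, provided the quadratic form of `B` is a contraction. -/
lemma traceLe {n : Type*} [Fintype n] [DecidableEq n] {A B : Matrix n n ℂ}
    (hA : A.IsHermitian)
    (hB : ∀ x : n → ℂ, ‖star x ⬝ᵥ B *ᵥ x‖ ≤ ∑ i, Complex.normSq (x i)) :
    ((A * B).trace).re ≤ ∑ i, |hA.eigenvalues i| := by
  have hUU : star (hA.eigenvectorUnitary : Matrix n n ℂ) * (hA.eigenvectorUnitary : Matrix n n ℂ) = 1 :=
    mem_unitaryGroup_iff'.mp hA.eigenvectorUnitary.2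
  set U : Matrix n n ℂ := (hA.eigenvectorUnitary : Matrix n n ℂ) with hU
  set C : Matrix n n ℂ := star U * (B * U) with hC
  have htr : (A * B).trace = ∑ i, (hA.eigenvalues i : ℂ) * C i i := by
    conv_lhs => rw [hA.spectral_theorem, Unitary.conjStarAlgAut_apply]
    rw [← hU, Matrix.trace_mul_cycle, Matrix.trace_mul_cycle, ← Matrix.mul_assoc,
      Matrix.trace_mul_comm]
    rw [Matrix.mul_assoc, ← hC]
    simp [Matrix.trace, Matrix.diag, Matrix.diagonal_mul]
  have hcol : ∀ i, (∑ j, Complex.normSq (U j i)) = 1 := by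
    intro i
    have h1 := congrFun (congrFun hUU i) i
    simp only [Matrix.mul_apply, Matrix.one_apply_eq, Matrix.star_apply] at h1
    have h2 : ∑ j, (Complex.normSq (U j i) : ℂ) = 1 := by
      rw [← h1]; congr 1; ext j
      rw [Complex.normSq_eq_conj_mul_self]; rfl
    exact_mod_cast h2
  have hdiag : ∀ i, ‖C i i‖ ≤ 1 := by
    intro i
    have hx := hB (fun j => U j i)
    have hCe : C i i = star (fun j => U j i) ⬝ᵥ B *ᵥ (fun j => U j i) := by
      rw [hC, ← Matrix.mul_assoc]
      simp only [Matrix.mul_apply, Matrix.mulVec, dotProduct, Matrix.star_apply,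
        Pi.star_apply, Finset.mul_sum, Finset.sum_mul, mul_comm, mul_assoc, mul_left_comm]
      rw [Finset.sum_comm]
      exact Finset.sum_congr rfl fun y _ => Finset.sum_congr rfl fun x _ => by ring
    rw [hCe]
    calc ‖_‖ ≤ ∑ j, Complex.normSq (U j i) := hx
      _ = 1 := hcol i
  rw [htr, Complex.re_sum]
  apply Finset.sum_le_sum
  intro i _
  rw [Complex.re_ofReal_mul]
  calc hA.eigenvalues i * (C i i).re
      ≤ |hA.eigenvalues i * (C i i).re| := le_abs_self _
    _ = |hA.eigenvalues i| * |(C i i).re| := abs_mul _ _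
    _ ≤ |hA.eigenvalues i| * 1 := by
        apply mul_le_mul_of_nonneg_left _ (abs_nonneg _)
        exact le_trans (Complex.abs_re_le_norm _) (hdiag i)
    _ = |hA.eigenvalues i| := mul_one _

lemma gain_prod {G : SimpleGraph V} {φ : V → V → ℂ} (hg : IsGain G φ) {p q : V}
    (h : G.Adj p q) : φ p q * φ q p = 1 := by
  rw [hg.inv p q h]
  exact mul_inv_cancel₀ (by
    intro h0
    have := hg.unit p q h
    rw [h0] at this; simp at this)

/-- the edge matrix of an ordered adjacent pair -/
noncomputable def edgeMat (φ : V → V → ℂ) [DecidableEq V] (p q : V) : Matrix V V ℂ :=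
  Matrix.single p q (φ p q) + Matrix.single q p (φ q p)

lemma edge_trace [Fintype V] [DecidableEq V] {G : SimpleGraph V} {φ : V → V → ℂ}
    (hg : IsGain G φ) {p q : V} (h : G.Adj p q) :
    (gainAdj G φ * edgeMat φ p q).trace = 2 := by
  have hA1 : gainAdj G φ q p = φ q p := if_pos h.symm
  have hA2 : gainAdj G φ p q = φ p q := if_pos h
  rw [edgeMat, mul_add, Matrix.trace_add, trace_mul_std, trace_mul_std, hA1, hA2,
    mul_comm (φ q p) (φ p q), gain_prod hg h]
  norm_num

lemma edge_qf' [Fintype V] [DecidableEq V] {G : SimpleGraph V} {φ : V → V → ℂ}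
    (hg : IsGain G φ) {p q : V} (h : G.Adj p q) (x : V → ℂ) :
    ‖star x ⬝ᵥ (edgeMat φ p q) *ᵥ x‖
      ≤ 2 * ‖x p‖ * ‖x q‖ := by
  rw [edgeMat, Matrix.add_mulVec, dotProduct_add, qf_std, qf_std]
  calc ‖_‖ ≤ ‖(starRingEnd ℂ) (x p) * (φ p q * x q)‖
        + ‖(starRingEnd ℂ) (x q) * (φ q p * x p)‖ := norm_add_le _ _
    _ ≤ 2 * ‖x p‖ * ‖x q‖ := by
        rw [norm_mul, norm_mul, norm_mul, norm_mul,
          Complex.norm_conj, Complex.norm_conj, hg.unit p q h, hg.unit q p h.symm]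
        ring_nf
        nlinarith [norm_nonneg (x p), norm_nonneg (x q)]

lemma edge_qf [Fintype V] [DecidableEq V] {G : SimpleGraph V} {φ : V → V → ℂ}
    (hg : IsGain G φ) {p q : V} (h : G.Adj p q) (x : V → ℂ) :
    ‖star x ⬝ᵥ (edgeMat φ p q) *ᵥ x‖
      ≤ Complex.normSq (x p) + Complex.normSq (x q) := by
  refine le_trans (edge_qf' hg h x) ?_
  have h1 : Complex.normSq (x p) = ‖x p‖ ^ 2 := (Complex.sq_norm _).symm
  have h2 : Complex.normSq (x q) = ‖x q‖ ^ 2 := (Complex.sq_norm _).symm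
  rw [h1, h2]
  nlinarith [norm_nonneg (x p), norm_nonneg (x q),
    sq_nonneg (‖x p‖ - ‖x q‖)]

lemma path_qf [Fintype V] [DecidableEq V] {G : SimpleGraph V} {φ : V → V → ℂ}
    (hg : IsGain G φ) {v u w : V} (h1 : G.Adj v u) (h2 : G.Adj u w) (x : V → ℂ) :
    ‖star x ⬝ᵥ (((Real.sqrt 2 : ℂ))⁻¹ • (edgeMat φ v u + edgeMat φ u w)) *ᵥ x‖
      ≤ Complex.normSq (x v) + Complex.normSq (x u) + Complex.normSq (x w) := by
  have hs0 : (0:ℝ) < Real.sqrt 2 := Real.sqrt_pos.mpr (by norm_num)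
  have hs2 : Real.sqrt 2 ^ 2 = 2 := Real.sq_sqrt (by norm_num)
  rw [Matrix.smul_mulVec, dotProduct_smul, smul_eq_mul, norm_mul,
    norm_inv, Complex.norm_of_nonneg hs0.le, Matrix.add_mulVec, dotProduct_add]
  have hadd := norm_add_le (star x ⬝ᵥ (edgeMat φ v u) *ᵥ x)
    (star x ⬝ᵥ (edgeMat φ u w) *ᵥ x)
  have e1 := edge_qf' hg h1 x
  have e2 := edge_qf' hg h2 x
  set a := ‖x v‖
  set b := ‖x u‖
  set c := ‖x w‖
  have ha : Complex.normSq (x v) = a ^ 2 := (Complex.sq_norm _).symm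
  have hb : Complex.normSq (x u) = b ^ 2 := (Complex.sq_norm _).symm
  have hc : Complex.normSq (x w) = c ^ 2 := (Complex.sq_norm _).symm
  rw [ha, hb, hc]
  have key : (Real.sqrt 2)⁻¹ * (2 * a * b + 2 * b * c) ≤ a ^ 2 + b ^ 2 + c ^ 2 := by
    rw [inv_mul_le_iff₀ hs0]
    nlinarith [sq_nonneg (Real.sqrt 2 * b - a - c), sq_nonneg (a - c),
      norm_nonneg (x v), norm_nonneg (x u), norm_nonneg (x w)]
  calc (Real.sqrt 2)⁻¹ * ‖_‖
      ≤ (Real.sqrt 2)⁻¹ * (2 * a * b + 2 * b * c) := by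
        apply mul_le_mul_of_nonneg_left _ (inv_nonneg.mpr hs0.le)
        exact le_trans hadd (add_le_add e1 e2)
    _ ≤ a ^ 2 + b ^ 2 + c ^ 2 := key

lemma dot_sum_mulVec {n ι : Type*} [Fintype n] (s : Finset ι) (A : ι → Matrix n n ℂ)
    (x y : n → ℂ) :
    y ⬝ᵥ (∑ f ∈ s, A f) *ᵥ x = ∑ f ∈ s, y ⬝ᵥ (A f) *ᵥ x := by
  classical
  induction s using Finset.induction_on with
  | empty => simp [Matrix.zero_mulVec]
  | insert a s hns ih =>
    rw [Finset.sum_insert hns, Finset.sum_insert hns, Matrix.add_mulVec,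
      dotProduct_add, ih]

lemma matching_facts [Fintype V] (G : SimpleGraph V) :
    ∃ M : Finset (Sym2 V), IsGraphMatching G M ∧ M.card = matchingNumber G ∧
      ∀ n, (∃ M' : Finset (Sym2 V), IsGraphMatching G M' ∧ M'.card = n) → n ≤ matchingNumber G := by
  classical
  set N := {n | ∃ M : Finset (Sym2 V), IsGraphMatching G M ∧ M.card = n} with hN
  have hbdd : BddAbove N := by
    refine ⟨Fintype.card (Sym2 V), fun n hn => ?_⟩
    obtain ⟨M, _, rfl⟩ := hn
    exact Finset.card_le_univ M
  have hne : N.Nonempty := ⟨0, ∅, ⟨by simp, by simp⟩, rfl⟩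
  have hmem : matchingNumber G ∈ N := Nat.sSup_mem hne hbdd
  obtain ⟨M, hM, hcard⟩ := hmem
  exact ⟨M, hM, hcard, fun n hn => le_csSup hbdd hn⟩

/-- if the underlying graph has no isolated vertices and the energy equals
twice the matching number, then the underlying graph has a perfect matching. -/
theorem exists_perfect_matching_of_gainEnergy_eq [Fintype V] [DecidableEq V]
    (G : SimpleGraph V) (φ : V → V → ℂ) (hg : IsGain G φ)
    (hiso : ∀ v : V, ∃ w : V, G.Adj v w)
    (hE : gainEnergy G φ hg = 2 * (matchingNumber G : ℝ)) :
    ∃ M : Finset (Sym2 V), IsGraphMatching G M ∧ ∀ v : V, ∃ e ∈ M, v ∈ e := by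
  obtain ⟨M, hM, hcard, hmax⟩ := matching_facts G
  by_cases hsat : ∀ v : V, ∃ e ∈ M, v ∈ e
  · exact ⟨M, hM, hsat⟩
  push_neg at hsat
  obtain ⟨v, hv⟩ := hsat
  obtain ⟨u, hadj⟩ := hiso v
  exfalso
  -- u must be saturated
  have husat : ∃ e ∈ M, u ∈ e := by
    by_contra hu
    push_neg at hu
    have hnotM : s(v, u) ∉ M := fun h => hv _ h (Sym2.mem_mk_left v u)
    have hM' : IsGraphMatching G (insert s(v, u) M) := by
      constructor
      · rw [Finset.coe_insert, Set.insert_subset_iff]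
        exact ⟨hadj, hM.1⟩
      · intro e he f hf hef z hze
        have hvert : ∀ g ∈ M, ∀ y : V, y ∈ s(v, u) → y ∉ g := by
          intro g hg' y hy
          rcases Sym2.mem_iff.mp hy with rfl | rfl
          · exact hv g hg'
          · exact hu g hg'
        rcases Finset.mem_insert.mp he with he1 | he2
        · rcases Finset.mem_insert.mp hf with hf1 | hf2
          · exact absurd (he1.trans hf1.symm) hef
          · subst he1; exact hvert f hf2 z hze
        · rcases Finset.mem_insert.mp hf with hf1 | hf2
          · subst hf1; intro hzf; exact hvert e he2 z hzf hze
          · exact hM.2 e he2 f hf2 hef z hze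
    have : M.card + 1 ≤ matchingNumber G := by
      refine hmax _ ⟨_, hM', ?_⟩
      rw [Finset.card_insert_of_notMem hnotM]
    omega
  obtain ⟨e, heM, hue⟩ := husat
  obtain ⟨w, hew⟩ := Sym2.mem_iff_exists.mp hue
  subst hew
  have hadj_uw : G.Adj u w := (SimpleGraph.mem_edgeSet G).mp (hM.1 heM)
  have hwe : w ∈ s(u, w) := Sym2.mem_mk_right u w
  have hvw : v ≠ w := fun h => hv _ heM (h ▸ hwe)
  have hvu : v ≠ u := hadj.ne
  have huw : u ≠ w := hadj_uw.ne
  -- representatives of matching edges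
  set pf : Sym2 V → V := fun f => (Quot.out f).1 with hpf
  set qf : Sym2 V → V := fun f => (Quot.out f).2 with hqf
  have hout : ∀ f : Sym2 V, s(pf f, qf f) = f := fun f => Quot.out_eq f
  have hadjf : ∀ f ∈ M, G.Adj (pf f) (qf f) := by
    intro f hf
    have := hM.1 hf
    rw [← hout f] at this
    exact (SimpleGraph.mem_edgeSet G).mp this
  have hpmem : ∀ f : Sym2 V, pf f ∈ f := fun f => Sym2.out_fst_mem f
  have hqmem : ∀ f : Sym2 V, qf f ∈ f := fun f => Sym2.out_snd_mem f
  set E := M.erase s(u, w) with hEdef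
  have hunot : ∀ f ∈ E, u ∉ f := by
    intro f hf
    exact hM.2 _ heM f (Finset.mem_of_mem_erase hf)
      (Ne.symm (Finset.ne_of_mem_erase hf)) u hue
  have hwnot : ∀ f ∈ E, w ∉ f := by
    intro f hf
    exact hM.2 _ heM f (Finset.mem_of_mem_erase hf)
      (Ne.symm (Finset.ne_of_mem_erase hf)) w hwe
  -- the dual matrix B
  set A := gainAdj G φ with hA
  set B : Matrix V V ℂ :=
    ((Real.sqrt 2 : ℂ))⁻¹ • (edgeMat φ v u + edgeMat φ u w)
      + ∑ f ∈ E, edgeMat φ (pf f) (qf f) with hB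
  -- trace computation
  have htrace : (A * B).trace = (((Real.sqrt 2)⁻¹ * 4 + 2 * E.card : ℝ) : ℂ) := by
    rw [hB, mul_add, Matrix.trace_add, Matrix.mul_smul, Matrix.trace_smul, mul_add,
      Matrix.trace_add, edge_trace hg hadj, edge_trace hg hadj_uw, Finset.mul_sum,
      Matrix.trace_sum]
    rw [Finset.sum_congr rfl (fun f hf => edge_trace hg (hadjf f (Finset.mem_of_mem_erase hf)))]
    rw [Finset.sum_const, nsmul_eq_mul]
    push_cast
    rw [smul_eq_mul, hEdef]
    ring
  -- quadratic form bound
  have hqf2 : ∀ x : V → ℂ, ‖star x ⬝ᵥ B *ᵥ x‖ ≤ ∑ i, Complex.normSq (x i) := by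
    intro x
    rw [hB, Matrix.add_mulVec, dotProduct_add]
    have h1 := path_qf hg hadj hadj_uw x
    have h2 : ‖star x ⬝ᵥ (∑ f ∈ E, edgeMat φ (pf f) (qf f)) *ᵥ x‖
        ≤ ∑ f ∈ E, (Complex.normSq (x (pf f)) + Complex.normSq (x (qf f))) := by
      rw [dot_sum_mulVec]
      refine le_trans (norm_sum_le _ _) ?_
      exact Finset.sum_le_sum fun f hf =>
          edge_qf hg (hadjf f (Finset.mem_of_mem_erase hf)) x
    -- disjointness bookkeeping
    set W : Finset V := E.biUnion (fun f => {pf f, qf f}) with hW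
    have hdisj : (↑E : Set (Sym2 V)).PairwiseDisjoint (fun f => ({pf f, qf f} : Finset V)) := by
      intro f hf f' hf' hne
      simp only [Function.onFun]
      rw [Finset.disjoint_left]
      intro z hz hz'
      have hzf : z ∈ f := by
        rcases Finset.mem_insert.mp hz with rfl | hz
        · exact hpmem f
        · rw [Finset.mem_singleton.mp hz]; exact hqmem f
      have hzf' : z ∈ f' := by
        rcases Finset.mem_insert.mp hz' with rfl | hz'
        · exact hpmem f'
        · rw [Finset.mem_singleton.mp hz']; exact hqmem f'
      exact hM.2 f (Finset.mem_of_mem_erase hf) f' (Finset.mem_of_mem_erase hf') hne z hzf hzf'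
    have hsumW : ∑ f ∈ E, (Complex.normSq (x (pf f)) + Complex.normSq (x (qf f)))
        = ∑ z ∈ W, Complex.normSq (x z) := by
      rw [hW, Finset.sum_biUnion hdisj]
      refine Finset.sum_congr rfl fun f hf => ?_
      rw [Finset.sum_pair (hadjf f (Finset.mem_of_mem_erase hf)).ne]
    set T : Finset V := {v, u, w} with hT
    have hTW : Disjoint T W := by
      rw [Finset.disjoint_left]
      intro z hzT hzW
      obtain ⟨f, hf, hzf⟩ := Finset.mem_biUnion.mp hzW
      have hzf2 : z ∈ f := by
        rcases Finset.mem_insert.mp hzf with rfl | hzf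
        · exact hpmem f
        · rw [Finset.mem_singleton.mp hzf]; exact hqmem f
      rcases Finset.mem_insert.mp hzT with rfl | hzT
      · exact hv f (Finset.mem_of_mem_erase hf) hzf2
      rcases Finset.mem_insert.mp hzT with rfl | hzT
      · exact hunot f hf hzf2
      · have hz' : z = w := Finset.mem_singleton.mp hzT
        subst hz'
        exact hwnot f hf hzf2
    have hsumT : Complex.normSq (x v) + Complex.normSq (x u) + Complex.normSq (x w)
        = ∑ z ∈ T, Complex.normSq (x z) := by
      rw [hT, Finset.sum_insert (by simp [hvu, hvw]), Finset.sum_insert (by simp [huw]),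
        Finset.sum_singleton]
      ring
    calc ‖_‖
        ≤ ‖star x ⬝ᵥ (((Real.sqrt 2 : ℂ))⁻¹ • (edgeMat φ v u + edgeMat φ u w)) *ᵥ x‖
          + ‖star x ⬝ᵥ (∑ f ∈ E, edgeMat φ (pf f) (qf f)) *ᵥ x‖ :=
          norm_add_le _ _
      _ ≤ (∑ z ∈ T, Complex.normSq (x z)) + ∑ z ∈ W, Complex.normSq (x z) := by
          rw [← hsumT, ← hsumW]; exact add_le_add h1 h2
      _ = ∑ z ∈ T ∪ W, Complex.normSq (x z) := (Finset.sum_union hTW).symm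
      _ ≤ ∑ i, Complex.normSq (x i) :=
          Finset.sum_le_sum_of_subset_of_nonneg (Finset.subset_univ _)
            (fun i _ _ => Complex.normSq_nonneg _)
  -- apply duality
  have hle := traceLe hg.isHermitian hqf2
  rw [htrace, Complex.ofReal_re] at hle
  have hEn : gainEnergy G φ hg = ∑ i, |hg.isHermitian.eigenvalues i| := rfl
  rw [← hEn, hE] at hle
  -- numerics
  have hcardE : E.card + 1 = M.card := Finset.card_erase_add_one heM
  have hs0 : (0:ℝ) < Real.sqrt 2 := Real.sqrt_pos.mpr (by norm_num)
  have hs2 : Real.sqrt 2 ^ 2 = 2 := Real.sq_sqrt (by norm_num)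
  have hslt : Real.sqrt 2 < 2 := by nlinarith
  have hinv : (Real.sqrt 2)⁻¹ * 4 = 2 * Real.sqrt 2 := by
    rw [inv_mul_eq_div, div_eq_iff hs0.ne']
    nlinarith
  have h1lt : (1:ℝ) < Real.sqrt 2 := by nlinarith
  have hmu : (matchingNumber G : ℝ) = (E.card : ℝ) + 1 := by
    rw [← hcard, ← hcardE]
    push_cast
    ring
  rw [hmu, hinv] at hle
  nlinarith
end

section
/- Let Φ = (G, 𝕋, φ) be a complex unit gain graph, where G is a connected bipartite graph with at least two vertices. If 𝓔(Φ) = 2μ(G), then G is a regular complete bipartite graph, i.e., G is isomorphic to K_{n,n} for some n ≥ 1. -/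
open Matrix

variable {V : Type*}

lemma exists_matching_invol [DecidableEq V] {G : SimpleGraph V} {M : Finset (Sym2 V)}
    (hM : IsGraphMatching G M) :
    ∃ σ : V → V, (∀ v, σ (σ v) = v) ∧ (∀ v, σ v ≠ v → G.Adj v (σ v)) ∧
      (∀ v, σ v ≠ v ↔ ∃ e ∈ M, v ∈ e) ∧ (∀ v, σ v ≠ v → s(v, σ v) ∈ M) := by
  classical
  set σ : V → V := fun v => if h : ∃ e ∈ M, v ∈ e then Sym2.Mem.other' h.choose_spec.2 else v
    with hσ
  have key : ∀ v, (∃ e ∈ M, v ∈ e) → s(v, σ v) ∈ M ∧ σ v ≠ v := by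
    intro v hv
    have h1 : σ v = Sym2.Mem.other' hv.choose_spec.2 := by simp only [hσ]; exact dif_pos hv
    have h2 : s(v, σ v) = hv.choose := by rw [h1]; exact Sym2.other_spec' hv.choose_spec.2
    have hmem : s(v, σ v) ∈ M := h2 ▸ hv.choose_spec.1
    refine ⟨hmem, fun hvv => ?_⟩
    exact G.not_isDiag_of_mem_edgeSet (hM.1 hmem)
      (by rw [hvv]; exact Sym2.mk_isDiag_iff.mpr rfl)
  have hunm : ∀ v, ¬(∃ e ∈ M, v ∈ e) → σ v = v := fun v hv => by
    simp only [hσ]; exact dif_neg hv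
  have hne_iff : ∀ v, σ v ≠ v ↔ ∃ e ∈ M, v ∈ e := by
    intro v
    refine ⟨fun h => ?_, fun h => (key v h).2⟩
    by_contra hc; exact h (hunm v hc)
  have hedge : ∀ v, σ v ≠ v → s(v, σ v) ∈ M := fun v h => (key v ((hne_iff v).mp h)).1
  have hadj : ∀ v, σ v ≠ v → G.Adj v (σ v) := fun v h =>
    (SimpleGraph.mem_edgeSet G).mp (hM.1 (hedge v h))
  have hinv : ∀ v, σ (σ v) = v := by
    intro v
    by_cases h : σ v = v
    · rw [h]; exact h
    · have hm := hedge v h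
      have hw : ∃ e ∈ M, (σ v) ∈ e := ⟨s(v, σ v), hm, Sym2.mem_mk_right _ _⟩
      have h2 := hedge (σ v) ((hne_iff _).mpr hw)
      have heq : s(σ v, σ (σ v)) = s(v, σ v) := by
        by_contra hne
        exact hM.2 _ h2 _ hm hne (σ v) (Sym2.mem_mk_left _ _) (Sym2.mem_mk_right _ _)
      exact Sym2.congr_right.mp (heq.trans (Sym2.eq_swap))
  exact ⟨σ, hinv, hadj, hne_iff, hedge⟩

set_option maxHeartbeats 2000000 in
/-- if the underlying graph is connected and bipartite with at least two
vertices, and the energy equals twice the matching number, then the underlying graph is a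
regular complete bipartite graph `K_{n,n}`. -/
theorem iso_completeBipartite_of_gainEnergy_eq [Fintype V] [DecidableEq V]
    (G : SimpleGraph V) (φ : V → V → ℂ) (hg : IsGain G φ)
    (hconn : G.Connected) (hbip : G.Colorable 2) (hcard : 2 ≤ Fintype.card V)
    (hE : gainEnergy G φ hg = 2 * (matchingNumber G : ℝ)) :
    ∃ n : ℕ, 1 ≤ n ∧ Nonempty (G ≃g completeBipartiteGraph (Fin n) (Fin n)) := by
  classical
  set A := gainAdj G φ with hAdef
  have hA : A.IsHermitian := hg.isHermitian
  set d : V → ℝ := hA.eigenvalues with hd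
  have hE' : ∑ i, |d i| = 2 * (matchingNumber G : ℝ) := hE
  set W : Matrix V V ℂ := (hA.eigenvectorUnitary : Matrix V V ℂ) with hW
  have hW1 : W * star W = 1 := mem_unitaryGroup_iff.mp hA.eigenvectorUnitary.2
  have hW2 : star W * W = 1 := mem_unitaryGroup_iff'.mp hA.eigenvectorUnitary.2
  have hspec : A = W * diagonal (RCLike.ofReal ∘ d) * star W := hA.spectral_theorem
  -- basic entry facts
  have hAadj : ∀ u v, G.Adj u v → A u v = φ u v := fun u v h => if_pos h
  have hAnadj : ∀ u v, ¬ G.Adj u v → A u v = 0 := fun u v h => if_neg h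
  have hAdiag : ∀ v, A v v = 0 := fun v => hAnadj v v (G.irrefl)
  have hφne : ∀ u v, G.Adj u v → φ u v ≠ 0 := by
    intro u v h h0
    have := hg.unit u v h
    rw [h0] at this
    simp at this
  have hφmul : ∀ u v, G.Adj u v → φ u v * φ v u = 1 := by
    intro u v h
    rw [hg.inv u v h]
    exact mul_inv_cancel₀ (hφne u v h)
  -- a maximum matching
  obtain ⟨M, hM, hMcard⟩ : ∃ M : Finset (Sym2 V), IsGraphMatching G M ∧
      M.card = matchingNumber G := by
    have h := Nat.sSup_mem (s := {n | ∃ M : Finset (Sym2 V), IsGraphMatching G M ∧ M.card = n})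
      ⟨0, ∅, ⟨by simp, by simp⟩, by simp⟩
      ⟨Fintype.card (Sym2 V), fun n hn => by
        obtain ⟨M, _, rfl⟩ := hn
        exact le_trans (Finset.card_le_univ M) (le_of_eq (Finset.card_univ))⟩
    exact h
  obtain ⟨σ, hσσ, hσadj, hσmem, hσedge⟩ := exists_matching_invol hM
  have hσinj : ∀ a b, σ a = σ b → a = b := fun a b h => by rw [← hσσ a, h, hσσ]
  -- the matching matrix
  set B : Matrix V V ℂ :=
    Matrix.of (fun u v => if v = σ u then (if u = v then 1 else φ u v) else 0) with hBdef
  have hBe : ∀ u v, B u v = if v = σ u then (if u = v then 1 else φ u v) else 0 :=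
    fun u v => rfl
  have hBstar : star B = B := by
    ext u v
    rw [Matrix.star_apply, hBe, hBe]
    by_cases h : v = σ u
    · have h' : u = σ v := by rw [h, hσσ]
      rw [if_pos h, if_pos h']
      by_cases huv : u = v
      · rw [if_pos huv, if_pos huv.symm]; simp
      · rw [if_neg huv, if_neg (Ne.symm huv)]
        have hne2 : σ u ≠ u := fun hh => huv ((h.trans hh).symm)
        have hadj : G.Adj u v := by rw [h]; exact hσadj u hne2
        rw [hg.inv v u hadj.symm, Complex.inv_eq_conj (hg.unit v u hadj.symm)]
        simp
    · have h' : ¬ u = σ v := fun hh => h (by rw [hh, hσσ])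
      rw [if_neg h, if_neg h']
      simp
  have hBB : B * B = 1 := by
    ext u w
    rw [Matrix.mul_apply]
    rw [Finset.sum_eq_single (σ u)]
    · by_cases h : w = u
      · subst h
        rw [Matrix.one_apply_eq, hBe, hBe, if_pos rfl, if_pos (hσσ w).symm]
        by_cases h2 : σ w = w
        · rw [if_pos h2.symm, if_pos h2]; simp
        · rw [if_neg (fun hh => h2 hh.symm), if_neg h2]
          exact hφmul w (σ w) (hσadj w h2)
      · rw [Matrix.one_apply_ne (fun hh => h hh.symm), hBe (σ u) w,
          if_neg (fun hh => h (by rw [hh, hσσ])), mul_zero]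
    · intro v _ hv
      rw [hBe u v, if_neg hv, zero_mul]
    · simp
  set P := A * B with hPdef
  have hPe : ∀ x y, P x y = A x (σ y) * B (σ y) y := by
    intro x y
    rw [hPdef, Matrix.mul_apply]
    rw [Finset.sum_eq_single (σ y)]
    · intro v _ hv
      have hne : ¬ y = σ v := fun h => hv (by rw [h, hσσ])
      rw [hBe v y, if_neg hne, mul_zero]
    · simp
  have hmatchcard : (Finset.univ.filter fun v => σ v ≠ v).card = 2 * M.card := by
    have hset : Finset.univ.filter (fun v => σ v ≠ v)
        = M.biUnion (fun e => Finset.univ.filter (· ∈ e)) := by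
      ext v
      simp only [Finset.mem_filter, Finset.mem_biUnion, Finset.mem_univ, true_and]
      exact hσmem v
    rw [hset, Finset.card_biUnion]
    · have h2 : ∀ e ∈ M, (Finset.univ.filter (· ∈ e)).card = 2 := by
        intro e he
        induction e using Sym2.ind with
        | _ a b =>
          have hab : a ≠ b := fun h =>
            G.not_isDiag_of_mem_edgeSet (hM.1 he) (Sym2.mk_isDiag_iff.mpr h)
          have hst : Finset.univ.filter (· ∈ s(a, b)) = {a, b} := by
            ext v
            simp [Sym2.mem_iff]
          rw [hst, Finset.card_insert_of_notMem (by simp [hab]), Finset.card_singleton]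
      rw [Finset.sum_congr rfl h2, Finset.sum_const, smul_eq_mul, mul_comm]
    · intro e he f hf hne
      refine Finset.disjoint_left.mpr ?_
      intro v hv1 hv2
      exact hM.2 e he f hf hne v (Finset.mem_filter.mp hv1).2 (Finset.mem_filter.mp hv2).2
  have htrace : trace P = ((Finset.univ.filter fun v => σ v ≠ v).card : ℂ) := by
    rw [Matrix.trace, Finset.card_filter]
    push_cast
    apply Finset.sum_congr rfl
    intro u _
    rw [Matrix.diag_apply, hPe u u]
    by_cases h : σ u = u
    · rw [if_neg (not_not_intro h), h, hAdiag, zero_mul]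
    · rw [if_pos h, hAadj u (σ u) (hσadj u h), hBe, if_pos (hσσ u).symm, if_neg h]
      exact hφmul u (σ u) (hσadj u h)
  set C : Matrix V V ℂ := star W * B * W with hCdef
  have hCunit : C ∈ unitaryGroup V ℂ := by
    have hBu : B ∈ unitaryGroup V ℂ := by
      rw [mem_unitaryGroup_iff']
      rw [hBstar, hBB]
    exact mul_mem (mul_mem (Unitary.star_mem hA.eigenvectorUnitary.2) hBu)
      hA.eigenvectorUnitary.2
  have hCstar : star C = C := by
    simp only [hCdef, Matrix.star_mul, star_star, hBstar, Matrix.mul_assoc]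
  have hColSum : ∀ i, ∑ j, Complex.normSq (C j i) = 1 := by
    intro i
    have h1 : (star C * C) i i = 1 := by
      rw [mem_unitaryGroup_iff'.mp hCunit, Matrix.one_apply_eq]
    rw [Matrix.mul_apply] at h1
    have h2 : ∀ j, (star C) i j * C j i = ((Complex.normSq (C j i) : ℝ) : ℂ) := by
      intro j
      rw [Matrix.star_apply, Complex.star_def, ← Complex.normSq_eq_conj_mul_self]
    rw [Finset.sum_congr rfl (fun j _ => h2 j)] at h1
    have h3 : ((∑ j, Complex.normSq (C j i) : ℝ) : ℂ) = ((1 : ℝ) : ℂ) := by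
      push_cast
      rw [h1]
    exact_mod_cast h3
  have hAB : P = W * ((diagonal (RCLike.ofReal ∘ d)) * C) * star W := by
    rw [hPdef, hspec, hCdef]
    simp only [Matrix.mul_assoc]
    rw [hW1, Matrix.mul_one]
  have htrDC : trace P = ∑ i, (d i : ℂ) * C i i := by
    rw [hAB, Matrix.trace_mul_cycle, ← Matrix.mul_assoc, hW2, Matrix.one_mul, Matrix.trace]
    apply Finset.sum_congr rfl
    intro i _
    rw [Matrix.diag_apply, Matrix.diagonal_mul]
    rfl
  have hre : ∑ i, d i * (C i i).re = 2 * (matchingNumber G : ℝ) := by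
    have heqC : ∑ i, (d i : ℂ) * C i i = ((2 * M.card : ℕ) : ℂ) := by
      rw [← htrDC, htrace, hmatchcard]
    have h2 := congrArg Complex.re heqC
    simp only [Complex.re_sum, Complex.re_ofReal_mul, Complex.natCast_re] at h2
    rw [h2, hMcard]
    push_cast
    ring
  have habsC : ∀ i, ‖C i i‖ ≤ 1 := by
    intro i
    have h1 : Complex.normSq (C i i) ≤ 1 := by
      rw [← hColSum i]
      exact Finset.single_le_sum (f := fun j => Complex.normSq (C j i))
        (fun j _ => Complex.normSq_nonneg _) (Finset.mem_univ i)
    rw [Complex.norm_def]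
    exact Real.sqrt_le_one.mpr h1
  have hterm : ∀ i ∈ Finset.univ, d i * (C i i).re ≤ |d i| := by
    intro i _
    calc d i * (C i i).re ≤ |d i * (C i i).re| := le_abs_self _
      _ = |d i| * |(C i i).re| := abs_mul _ _
      _ ≤ |d i| * 1 := by
          refine mul_le_mul_of_nonneg_left ?_ (abs_nonneg _)
          exact le_trans (Complex.abs_re_le_norm _) (habsC i)
      _ = |d i| := mul_one _
  have hforce : ∀ i ∈ Finset.univ, d i * (C i i).re = |d i| := by
    apply (Finset.sum_eq_sum_iff_of_le hterm).mp
    rw [hre, hE']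
  have hDC : (diagonal (RCLike.ofReal ∘ d)) * C = diagonal (fun i => ((|d i| : ℝ) : ℂ)) := by
    ext i j
    rw [Matrix.diagonal_mul]
    by_cases hd0 : d i = 0
    · have : (RCLike.ofReal ∘ d) i = (0 : ℂ) := by simp [hd0]
      rw [this, zero_mul]
      rw [Matrix.diagonal_apply]
      by_cases hij : i = j
      · rw [if_pos hij]
        simp [← hij, hd0]
      · rw [if_neg hij]
    · -- get structure of C around i
      have hfr := hforce i (Finset.mem_univ i)
      have hre1 : (C i i).re = |d i| / d i := by
        field_simp at hfr ⊢
        linarith [hfr]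
      have habs1 : |(C i i).re| = 1 := by
        rw [hre1, abs_div, abs_abs]
        field_simp
      have hsq : (C i i).re ^ 2 = 1 := by
        have := sq_abs ((C i i).re)
        rw [habs1] at this
        nlinarith
      have hnsq : Complex.normSq (C i i) ≤ 1 := by
        rw [← hColSum i]
        exact Finset.single_le_sum (f := fun j => Complex.normSq (C j i))
          (fun j _ => Complex.normSq_nonneg _) (Finset.mem_univ i)
      have him : (C i i).im = 0 := by
        have h1 : Complex.normSq (C i i) = (C i i).re ^ 2 + (C i i).im ^ 2 := by
          rw [Complex.normSq_apply]; ring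
        nlinarith [sq_nonneg ((C i i).im)]
      have hCii : C i i = (((C i i).re : ℝ) : ℂ) := by
        apply Complex.ext <;> simp [him]
      have hnsq1 : Complex.normSq (C i i) = 1 := by
        have h1 : Complex.normSq (C i i) = (C i i).re ^ 2 + (C i i).im ^ 2 := by
          rw [Complex.normSq_apply]; ring
        rw [h1, him, hsq]; ring
      -- off-diagonal column entries vanish
      have hcol0 : ∀ j, j ≠ i → C j i = 0 := by
        intro j hj
        have hsum := hColSum i
        have hadd : Complex.normSq (C i i) + ∑ k ∈ Finset.univ.erase i, Complex.normSq (C k i)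
            = ∑ k, Complex.normSq (C k i) :=
          Finset.add_sum_erase Finset.univ (fun k => Complex.normSq (C k i)) (Finset.mem_univ i)
        have h0 : ∑ k ∈ Finset.univ.erase i, Complex.normSq (C k i) = 0 := by
          rw [← hadd, hnsq1] at hsum
          linarith
        have := (Finset.sum_eq_zero_iff_of_nonneg
          (fun k _ => Complex.normSq_nonneg (C k i))).mp h0 j
          (Finset.mem_erase.mpr ⟨hj, Finset.mem_univ j⟩)
        exact Complex.normSq_eq_zero.mp this
      have hrow0 : ∀ j, j ≠ i → C i j = 0 := by
        intro j hj
        have h1 : C i j = (star C) i j := by rw [hCstar]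
        rw [h1, Matrix.star_apply, hcol0 j hj]
        simp
      by_cases hij : i = j
      · subst hij
        rw [Matrix.diagonal_apply_eq, hCii]
        have : (RCLike.ofReal ∘ d) i = ((d i : ℝ) : ℂ) := rfl
        rw [this, hre1, ← Complex.ofReal_mul]
        congr 1
        field_simp
      · rw [hrow0 j (fun h => hij h.symm), mul_zero, Matrix.diagonal_apply_ne _ hij]
  have hPrep : P = W * diagonal (fun i => ((|d i| : ℝ) : ℂ)) * star W := by
    rw [hAB, hDC]
  have hPstar : star P = P := by
    rw [hPrep]
    have hdg : star (diagonal (fun i => ((|d i| : ℝ) : ℂ))) = diagonal (fun i => ((|d i| : ℝ) : ℂ)) := by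
      ext i j
      rw [Matrix.star_apply]
      by_cases hij : i = j
      · subst hij
        rw [Matrix.diagonal_apply_eq, Complex.star_def, Complex.conj_ofReal]
      · rw [Matrix.diagonal_apply_ne _ (fun h => hij h.symm), Matrix.diagonal_apply_ne _ hij,
          star_zero]
    simp only [Matrix.star_mul, star_star, hdg, Matrix.mul_assoc]
  have hPconj : ∀ x y, P y x = (starRingEnd ℂ) (P x y) := by
    intro x y
    conv_lhs => rw [← hPstar]
    rw [Matrix.star_apply, Complex.star_def]
  have hker : ∀ q : V → ℂ, star q ⬝ᵥ (P *ᵥ q) = 0 → P *ᵥ q = 0 := by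
    intro q hq
    have hy : P *ᵥ q = W *ᵥ (diagonal (fun i => ((|d i| : ℝ) : ℂ)) *ᵥ (star W *ᵥ q)) := by
      rw [hPrep, ← Matrix.mulVec_mulVec, ← Matrix.mulVec_mulVec]
    set y : V → ℂ := star W *ᵥ q with hydef
    have hsq : star q ᵥ* W = star y := by
      rw [hydef, Matrix.star_mulVec, Matrix.star_eq_conjTranspose,
        Matrix.conjTranspose_conjTranspose]
    have hdot : star q ⬝ᵥ (P *ᵥ q) = ∑ i, ((|d i| * Complex.normSq (y i) : ℝ) : ℂ) := by
      rw [hy, Matrix.dotProduct_mulVec, hsq, dotProduct]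
      apply Finset.sum_congr rfl
      intro i _
      rw [Matrix.mulVec_diagonal, Pi.star_apply, Complex.star_def]
      push_cast
      rw [Complex.normSq_eq_conj_mul_self]
      ring
    have h0 : ∑ i, |d i| * Complex.normSq (y i) = 0 := by
      have h1 : ((∑ i, |d i| * Complex.normSq (y i) : ℝ) : ℂ) = 0 := by
        rw [Complex.ofReal_sum, ← hdot]
        exact hq
      exact_mod_cast h1
    have hterm0 : ∀ i, |d i| * Complex.normSq (y i) = 0 := by
      intro i
      exact (Finset.sum_eq_zero_iff_of_nonneg
        (fun k _ => mul_nonneg (abs_nonneg _) (Complex.normSq_nonneg _))).mp h0 i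
        (Finset.mem_univ i)
    rw [hy]
    have hz : (diagonal (fun i => ((|d i| : ℝ) : ℂ)) *ᵥ y) = 0 := by
      funext i
      rw [Matrix.mulVec_diagonal]
      rcases mul_eq_zero.mp (hterm0 i) with h | h
      · rw [h]
        simp
      · rw [Complex.normSq_eq_zero.mp h]
        simp
    rw [hz, Matrix.mulVec_zero]
  have hnbr : ∀ v : V, ∃ u, G.Adj u v := by
    intro v
    obtain ⟨w, hw⟩ := Fintype.exists_ne_of_one_lt_card (by omega) v
    obtain ⟨p⟩ := hconn.preconnected v w
    cases p with
    | nil => exact absurd rfl hw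
    | cons h q => exact ⟨_, h.symm⟩
  have hall : ∀ v, σ v ≠ v := by
    intro v hvv
    have hBvv : B v v = 1 := by
      rw [hBe, if_pos hvv.symm, if_pos rfl]
    have hPvv : P v v = 0 := by
      rw [hPe, hvv, hAdiag, zero_mul]
    have hq0 : star (Pi.single v 1 : V → ℂ) ⬝ᵥ (P *ᵥ Pi.single v 1) = 0 := by
      have h1 : P *ᵥ (Pi.single v 1 : V → ℂ) = fun t => P t v := by
        rw [Matrix.mulVec_single]
        funext t
        simp
      rw [h1]
      have h2 : star (Pi.single v 1 : V → ℂ) = Pi.single v 1 := by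
        funext t
        rw [Pi.star_apply]
        by_cases ht : t = v
        · subst ht; rw [Pi.single_eq_same]; simp
        · rw [Pi.single_eq_of_ne ht]; simp
      rw [h2, single_dotProduct, one_mul, hPvv]
    have hcol0 := hker _ hq0
    obtain ⟨u, hu⟩ := hnbr v
    have h3 : P u v = 0 := by
      have := congrFun hcol0 u
      rw [Matrix.mulVec_single] at this
      simpa using this
    rw [hPe, hvv, hBvv, mul_one, hAadj u v hu] at h3
    exact hφne u v hu h3
  have hPdiag : ∀ v, P v v = 1 := by
    intro v
    have hadj := hσadj v (hall v)
    rw [hPe, hAadj v (σ v) hadj, hBe, if_pos (hσσ v).symm, if_neg (hall v)]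
    exact hφmul v (σ v) hadj
  have habsP : ∀ x y, ‖P x y‖ = ‖A x (σ y)‖ := by
    intro x y
    rw [hPe, norm_mul]
    have h1 : B (σ y) y = φ (σ y) y := by
      rw [hBe, if_pos (hσσ y).symm, if_neg (hall y)]
    rw [h1, hg.unit (σ y) y (hσadj y (hall y)).symm, mul_one]
  have hcol : ∀ x y, ‖P x y‖ = 1 →
      ∀ t, ‖P t x‖ = ‖P t y‖ := by
    intro x y hxy t
    by_cases hxyeq : x = y
    · rw [hxyeq]
    set s0 : ℂ := P x y with hs0
    have habs0 : ‖s0‖ = 1 := hxy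
    have hns0 : (starRingEnd ℂ) s0 * s0 = 1 := by
      rw [mul_comm, Complex.mul_conj, Complex.normSq_eq_norm_sq, habs0]
      norm_num
    set q : V → ℂ := s0 • (Pi.single x (1:ℂ) : V → ℂ) - (Pi.single y (1:ℂ) : V → ℂ) with hqdef
    have hstarq : star q = (starRingEnd ℂ) s0 • (Pi.single x (1:ℂ) : V → ℂ) - (Pi.single y (1:ℂ) : V → ℂ) := by
      funext t
      simp only [hqdef, Pi.star_apply, Pi.sub_apply, Pi.smul_apply, smul_eq_mul,
        star_sub, star_mul', Complex.star_def, Pi.single_apply]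
      by_cases htx : t = x <;> by_cases hty : t = y <;> simp [htx, hty]
    have hPq : P *ᵥ q = s0 • (fun t => P t x) - (fun t => P t y) := by
      rw [hqdef, Matrix.mulVec_sub, Matrix.mulVec_smul]
      congr 1
      · congr 1
        rw [Matrix.mulVec_single]
        funext t; simp
      · rw [Matrix.mulVec_single]
        funext t; simp
    have hdot0 : star q ⬝ᵥ (P *ᵥ q) = 0 := by
      rw [hPq, hstarq]
      simp only [sub_dotProduct, smul_dotProduct, single_dotProduct,
        Pi.sub_apply, Pi.smul_apply, smul_eq_mul, one_mul]
      rw [hPdiag x, hPdiag y, hPconj x y, ← hs0]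
      linear_combination -hns0
    have hq0 := hker q hdot0
    rw [hPq] at hq0
    have h4 := congrFun hq0 t
    simp only [Pi.sub_apply, Pi.smul_apply, smul_eq_mul, Pi.zero_apply] at h4
    have h5 : P t y = s0 * P t x := (sub_eq_zero.mp h4).symm
    rw [h5, norm_mul, habs0, one_mul]
  -- coloring
  obtain ⟨hc⟩ := hbip
  have hflip : ∀ v, hc (σ v) ≠ hc v := fun v => (hc.valid (hσadj v (hall v))).symm
  have hfin2 : ∀ x y z : Fin 2, x ≠ y → (x = z ↔ ¬ y = z) := by decide
  have hparity : ∀ (a b : V) (p : G.Walk a b), (hc a = hc b ↔ Even p.length) := by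
    intro a b p
    induction p with
    | nil => simp
    | @cons u v w h q ih =>
      rw [SimpleGraph.Walk.length_cons, Nat.even_add_one, ← ih]
      exact hfin2 _ _ _ (hc.valid h)
  have hgen : ∀ a b, G.Adj a b → ∀ t, ‖P t a‖ = ‖P t (σ b)‖ := by
    intro a b hab t
    have h1 : ‖P a (σ b)‖ = 1 := by
      rw [habsP, hσσ, hAadj a b hab]
      exact hg.unit a b hab
    exact hcol a (σ b) h1 t
  have hwalk : ∀ (a b : V) (p : G.Walk a b),
      (Even p.length → (∀ t, ‖P t a‖ = ‖P t b‖) ∧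
        (∀ t, ‖P t (σ a)‖ = ‖P t (σ b)‖)) ∧
      (¬ Even p.length → (∀ t, ‖P t a‖ = ‖P t (σ b)‖) ∧
        (∀ t, ‖P t (σ a)‖ = ‖P t b‖)) := by
    intro a b p
    induction p with
    | nil =>
      exact ⟨fun _ => ⟨fun t => rfl, fun t => rfl⟩, fun h => absurd Even.zero h⟩
    | @cons u v w h q ih =>
      have g1 : ∀ t, ‖P t u‖ = ‖P t (σ v)‖ := hgen u v h
      have g2 : ∀ t, ‖P t v‖ = ‖P t (σ u)‖ := hgen v u h.symm
      constructor
      · intro hev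
        rw [SimpleGraph.Walk.length_cons, Nat.even_add_one] at hev
        obtain ⟨i1, i2⟩ := ih.2 hev
        exact ⟨fun t => ((g1 t).trans (i2 t)), fun t => ((g2 t).symm.trans (i1 t))⟩
      · intro hodd
        rw [SimpleGraph.Walk.length_cons, Nat.even_add_one, not_not] at hodd
        obtain ⟨i1, i2⟩ := ih.1 hodd
        exact ⟨fun t => ((g1 t).trans (i2 t)), fun t => ((g2 t).symm.trans (i1 t))⟩
  have hcomplete : ∀ u v, hc u ≠ hc v → G.Adj u v := by
    intro u v hne
    have h1 : hc u = hc (σ v) := by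
      have h2 : hc (σ v) ≠ hc v := hflip v
      revert hne h2
      generalize hc u = x
      generalize hc v = y
      generalize hc (σ v) = z
      revert x y z
      decide
    obtain ⟨p⟩ := hconn.preconnected u (σ v)
    have heven : Even p.length := (hparity _ _ p).mp h1
    have hR := ((hwalk u (σ v) p).1 heven).1
    have h3 := hR u
    rw [hPdiag u, norm_one] at h3
    have h4 : ‖A u v‖ = 1 := by
      have h5 := habsP u (σ v)
      rw [hσσ] at h5
      rw [← h5, ← h3]
    by_contra hnadj
    rw [hAnadj u v hnadj] at h4
    simp at h4
  -- construct the isomorphism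
  have hfin2b : ∀ x y : Fin 2, x ≠ y → ¬ y = 0 → x = 0 := by decide
  set X : Finset V := Finset.univ.filter (fun v => hc v = 0) with hX
  set n : ℕ := X.card with hn
  have hσflip0 : ∀ v, ¬ hc v = 0 → hc (σ v) = 0 := fun v hv => hfin2b _ _ (hflip v) hv
  have hσflip1 : ∀ v, hc v = 0 → ¬ hc (σ v) = 0 := fun v hv h2 =>
    hflip v (h2.trans hv.symm)
  have hY : (Finset.univ.filter (fun v => ¬ hc v = 0)).card = n := by
    rw [hn, hX]
    apply Finset.card_bij (fun a _ => σ a)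
    · intro a ha
      rw [Finset.mem_filter] at ha ⊢
      exact ⟨Finset.mem_univ _, hσflip0 a ha.2⟩
    · intro a _ b _ hab
      exact hσinj a b hab
    · intro b hb
      rw [Finset.mem_filter] at hb
      refine ⟨σ b, ?_, hσσ b⟩
      rw [Finset.mem_filter]
      exact ⟨Finset.mem_univ _, hσflip1 b hb.2⟩
  have hnpos : 1 ≤ n := by
    have hex : ∃ v : V, hc v = 0 := by
      obtain ⟨v⟩ := hconn.nonempty
      by_cases h : hc v = 0
      · exact ⟨v, h⟩
      · exact ⟨σ v, hσflip0 v h⟩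
    obtain ⟨v, hv⟩ := hex
    refine Finset.card_pos.mpr ⟨v, ?_⟩
    rw [hX, Finset.mem_filter]
    exact ⟨Finset.mem_univ _, hv⟩
  refine ⟨n, hnpos, ?_⟩
  have e1 : {v : V // hc v = 0} ≃ Fin n := by
    apply Fintype.equivFinOfCardEq
    rw [Fintype.card_subtype]
  have e2 : {v : V // ¬ hc v = 0} ≃ Fin n := by
    apply Fintype.equivFinOfCardEq
    rw [Fintype.card_subtype]
    exact hY
  set eqv : V ≃ (Fin n ⊕ Fin n) :=
    ((Equiv.sumCompl (fun v => hc v = 0)).symm).trans (Equiv.sumCongr e1 e2) with heqv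
  have heqvl : ∀ u (h : hc u = 0), eqv u = Sum.inl (e1 ⟨u, h⟩) := by
    intro u h
    rw [heqv]
    simp only [Equiv.trans_apply, Equiv.sumCongr_apply]
    rw [Equiv.sumCompl_symm_apply_of_pos (p := fun v => hc v = 0) h]
    rfl
  have heqvr : ∀ u (h : ¬ hc u = 0), eqv u = Sum.inr (e2 ⟨u, h⟩) := by
    intro u h
    rw [heqv]
    simp only [Equiv.trans_apply, Equiv.sumCongr_apply]
    rw [Equiv.sumCompl_symm_apply_of_neg (p := fun v => hc v = 0) h]
    rfl
  refine ⟨⟨eqv, ?_⟩⟩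
  intro u v
  constructor
  · intro hadj
    by_cases h1 : hc u = 0 <;> by_cases h2 : hc v = 0
    · rw [heqvl u h1, heqvl v h2] at hadj
      simp at hadj
    · exact hcomplete u v (fun h => h2 (h ▸ h1))
    · exact hcomplete u v (fun h => h1 (h ▸ h2))
    · rw [heqvr u h1, heqvr v h2] at hadj
      simp at hadj
  · intro hadj
    have hne : hc u ≠ hc v := hc.valid hadj
    by_cases h1 : hc u = 0 <;> by_cases h2 : hc v = 0
    · exact absurd (h1.trans h2.symm) hne
    · rw [heqvl u h1, heqvr v h2]
      simp
    · rw [heqvr u h1, heqvl v h2]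
      simp
    · have : ∀ x y : Fin 2, ¬ x = 0 → ¬ y = 0 → x = y := by decide
      exact absurd (this _ _ h1 h2) hne
end

section
/- Let Φ = (G, 𝕋, φ) be a complex unit gain graph, where G is a connected bipartite graph with at least two vertices. If 𝓔(Φ) = 2μ(G), then Φ is balanced. -/
open Matrix

variable {V : Type*}

section Aux
variable [Fintype V]


lemma gram_apply (B : Matrix V V ℂ) (x y : V) :
    (Bᴴ * B) x y = ∑ i, starRingEnd ℂ (B i x) * B i y := by
  simp [Matrix.mul_apply, Matrix.conjTranspose_apply]

lemma gram_conj (B : Matrix V V ℂ) (x y : V) :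
    (Bᴴ * B) y x = starRingEnd ℂ ((Bᴴ * B) x y) := by
  rw [_root_.gram_apply, _root_.gram_apply, map_sum]
  exact Finset.sum_congr rfl fun i _ => by
    rw [_root_.map_mul, Complex.conj_conj]; ring

/-- Cauchy–Schwarz equality: if `|P a b| = 1` with unit diagonal, column `b` is
`P a b` times column `a`. -/
lemma gram_col_parallel {B : Matrix V V ℂ} {a b : V}
    (ha : (Bᴴ * B) a a = 1) (hb : (Bᴴ * B) b b = 1)
    (hab : ‖(Bᴴ * B) a b‖ = 1) :
    ∀ i, B i b = (Bᴴ * B) a b * B i a := by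
  set c := (Bᴴ * B) a b with hc
  have hcc : c * starRingEnd ℂ c = 1 := by
    rw [Complex.mul_conj]
    norm_cast
    rw [← Complex.sq_norm, hab, one_pow]
  have key : ∑ i, (Complex.normSq (B i b - c * B i a) : ℝ) = 0 := by
    have hC : (∑ i, (Complex.normSq (B i b - c * B i a) : ℂ)) = 0 := by
      have step1 : (∑ i, (Complex.normSq (B i b - c * B i a) : ℂ)) =
          ∑ i, (starRingEnd ℂ (B i b) * B i b
            - starRingEnd ℂ c * (starRingEnd ℂ (B i a) * B i b)
            - c * (starRingEnd ℂ (B i b) * B i a)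
            + (c * starRingEnd ℂ c) * (starRingEnd ℂ (B i a) * B i a)) := by
        refine Finset.sum_congr rfl fun i _ => ?_
        rw [← Complex.mul_conj]
        simp only [map_sub, _root_.map_mul]
        ring
      rw [step1]
      simp only [Finset.sum_add_distrib, Finset.sum_sub_distrib, ← Finset.mul_sum]
      rw [← _root_.gram_apply, ← _root_.gram_apply, ← _root_.gram_apply, ← _root_.gram_apply, hb, ha, ← hc,
        gram_conj B a b, ← hc]
      linear_combination -hcc
    have := congrArg Complex.re hC
    simpa using this
  intro i
  have h0 : Complex.normSq (B i b - c * B i a) = 0 := by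
    have hnn : ∀ j ∈ Finset.univ, (0:ℝ) ≤ Complex.normSq (B j b - c * B j a) :=
      fun j _ => Complex.normSq_nonneg _
    exact (Finset.sum_eq_zero_iff_of_nonneg hnn).mp key i (Finset.mem_univ i)
  exact sub_eq_zero.mp (Complex.normSq_eq_zero.mp h0)

/-- From column parallelism: `P z b = P a b * P z a`. -/
lemma gram_entry_mul {B : Matrix V V ℂ} {a b : V}
    (ha : (Bᴴ * B) a a = 1) (hb : (Bᴴ * B) b b = 1)
    (hab : ‖(Bᴴ * B) a b‖ = 1) (z : V) :
    (Bᴴ * B) z b = (Bᴴ * B) a b * (Bᴴ * B) z a := by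
  rw [_root_.gram_apply B z b, _root_.gram_apply B z a, Finset.mul_sum]
  refine Finset.sum_congr rfl fun i _ => ?_
  rw [gram_col_parallel ha hb hab i]
  ring



section Matching
variable [DecidableEq V] (M : Finset (Sym2 V))

/-- The partner of `x` in the matching, or `x` itself if unmatched. -/
noncomputable def mfn (x : V) : V :=
  if h : ∃ y, s(x, y) ∈ M then h.choose else x

variable {M}

lemma mfn_mem {x : V} (h : ∃ y, s(x, y) ∈ M) : s(x, mfn M x) ∈ M := by
  rw [mfn, dif_pos h]; exact h.choose_spec

variable {G : SimpleGraph V} (hM : IsGraphMatching G M)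
include hM

lemma matching_unique {x y y' : V} (h1 : s(x, y) ∈ M) (h2 : s(x, y') ∈ M) : y = y' := by
  by_contra hne
  have hedge : s(x, y) ≠ s(x, y') := by
    intro hcon
    rcases Sym2.eq_iff.mp hcon with ⟨-, h⟩ | ⟨h1, h2⟩
    · exact hne h
    · exact hne (h2.trans h1)
  exact hM.2 _ h1 _ h2 hedge x (Sym2.mem_mk_left x y) (Sym2.mem_mk_left x y')

lemma mfn_eq {x y : V} (h : s(x, y) ∈ M) : mfn M x = y :=
  matching_unique hM (mfn_mem ⟨y, h⟩) h

lemma matched_mfn {x : V} (h : ∃ y, s(x, y) ∈ M) : ∃ y, s(mfn M x, y) ∈ M :=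
  ⟨x, by rw [Sym2.eq_swap]; exact mfn_mem h⟩

lemma mfn_invol {x : V} (h : ∃ y, s(x, y) ∈ M) : mfn M (mfn M x) = x :=
  mfn_eq hM (by rw [Sym2.eq_swap]; exact mfn_mem h)

lemma mfn_adj {x : V} (h : ∃ y, s(x, y) ∈ M) : G.Adj x (mfn M x) :=
  G.mem_edgeSet.mp (hM.1 (mfn_mem h))

lemma mfn_ne {x : V} (h : ∃ y, s(x, y) ∈ M) : mfn M x ≠ x :=
  fun he => G.irrefl (he ▸ mfn_adj hM h)

/-- number of matched vertices is twice the matching size -/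
lemma card_matched [Fintype V] [DecidableEq V] :
    (Finset.univ.filter (fun x : V => ∃ y, s(x, y) ∈ M)).card = 2 * M.card := by
  classical
  rw [Finset.card_eq_sum_card_fiberwise
    (f := fun x => s(x, mfn M x)) (t := M) (fun x hx => mfn_mem (Finset.mem_filter.mp hx).2)]
  rw [Finset.sum_congr rfl (g := fun _ => 2), Finset.sum_const, smul_eq_mul, mul_comm]
  intro e he
  induction e using Sym2.ind with
  | _ a b =>
    have hab : a ≠ b := (G.mem_edgeSet.mp (hM.1 he)).ne
    have : (Finset.univ.filter (fun x : V => ∃ y, s(x, y) ∈ M)).filter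
        (fun x => s(x, mfn M x) = s(a, b)) = {a, b} := by
      ext x
      simp only [Finset.mem_filter, Finset.mem_univ, true_and, Finset.mem_insert,
        Finset.mem_singleton]
      constructor
      · rintro ⟨hx, hfx⟩
        rcases Sym2.eq_iff.mp hfx with ⟨h1, -⟩ | ⟨h1, -⟩
        · exact Or.inl h1
        · exact Or.inr h1
      · rintro (rfl | rfl)
        · have hm : ∃ y, s(x, y) ∈ M := ⟨b, he⟩
          exact ⟨hm, by rw [mfn_eq hM he]⟩
        · have he' : s(x, a) ∈ M := by rw [Sym2.eq_swap]; exact he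
          have hm : ∃ y, s(x, y) ∈ M := ⟨a, he'⟩
          exact ⟨hm, by rw [mfn_eq hM he', Sym2.eq_swap]⟩
    rw [this, Finset.card_insert_of_notMem (by simpa using hab), Finset.card_singleton]

end Matching
end Aux



section UMatrix
variable [Fintype V] [DecidableEq V] {G : SimpleGraph V} {φ : V → V → ℂ}
  {M : Finset (Sym2 V)}

/-- The gain adjacency matrix of the matching `M`. -/
noncomputable def mU (M : Finset (Sym2 V)) (φ : V → V → ℂ) : Matrix V V ℂ :=
  fun x y => if s(x, y) ∈ M then φ x y else 0

lemma mU_apply_mem {x y : V} (h : s(x, y) ∈ M) : mU M φ x y = φ x y := by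
  rw [mU, if_pos h]

lemma mU_apply_not_mem {x y : V} (h : s(x, y) ∉ M) : mU M φ x y = 0 := by
  rw [mU, if_neg h]

lemma gainAdj_adj {x y : V} (h : G.Adj x y) : gainAdj G φ x y = φ x y := by
  rw [gainAdj, if_pos h]

lemma gainAdj_not_adj {x y : V} (h : ¬ G.Adj x y) : gainAdj G φ x y = 0 := by
  rw [gainAdj, if_neg h]

variable (hM : IsGraphMatching G M)
include hM

lemma mU_row (f : V → ℂ) (x : V) :
    ∑ z, mU M φ x z * f z =
      if ∃ y, s(x, y) ∈ M then φ x (mfn M x) * f (mfn M x) else 0 := by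
  by_cases h : ∃ y, s(x, y) ∈ M
  · rw [if_pos h]
    rw [Finset.sum_eq_single (mfn M x)]
    · rw [mU_apply_mem (mfn_mem h)]
    · intro z _ hz
      have : s(x, z) ∉ M := fun hc => hz (mfn_eq hM hc ▸ rfl)
      rw [mU_apply_not_mem this, zero_mul]
    · exact fun hc => absurd (Finset.mem_univ _) hc
  · rw [if_neg h]
    refine Finset.sum_eq_zero fun z _ => ?_
    rw [mU_apply_not_mem (fun hc => h ⟨z, hc⟩), zero_mul]

lemma mU_col (f : V → ℂ) (y : V) :
    ∑ z, f z * mU M φ z y =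
      if ∃ w, s(y, w) ∈ M then f (mfn M y) * φ (mfn M y) y else 0 := by
  by_cases h : ∃ w, s(y, w) ∈ M
  · rw [if_pos h]
    rw [Finset.sum_eq_single (mfn M y)]
    · rw [mU_apply_mem (by rw [Sym2.eq_swap]; exact mfn_mem h)]
    · intro z _ hz
      have : s(z, y) ∉ M := fun hc => hz (mfn_eq hM (by rwa [Sym2.eq_swap]) ▸ rfl)
      rw [mU_apply_not_mem this, mul_zero]
    · exact fun hc => absurd (Finset.mem_univ _) hc
  · rw [if_neg h]
    refine Finset.sum_eq_zero fun z _ => ?_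
    rw [mU_apply_not_mem (fun hc => h ⟨z, by rwa [Sym2.eq_swap]⟩), mul_zero]

variable (hg : IsGain G φ)
include hg

lemma mU_hermitian : (mU M φ)ᴴ = mU M φ := by
  ext x y
  rw [Matrix.conjTranspose_apply]
  by_cases h : s(x, y) ∈ M
  · have h' : s(y, x) ∈ M := by rwa [Sym2.eq_swap]
    rw [mU_apply_mem h, mU_apply_mem h']
    have hadj : G.Adj y x := (G.mem_edgeSet.mp (hM.1 h')).symm.symm
    rw [hg.inv y x hadj, Complex.inv_eq_conj (hg.unit y x hadj)]
    simp
  · have h' : s(y, x) ∉ M := by rwa [Sym2.eq_swap]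
    rw [mU_apply_not_mem h, mU_apply_not_mem h']
    simp

/-- The diagonal entries of `mU * gainAdj`. -/
lemma mUA_diag (x : V) :
    (mU M φ * gainAdj G φ) x x =
      if ∃ y, s(x, y) ∈ M then (1 : ℂ) else 0 := by
  rw [Matrix.mul_apply, mU_row hM]
  by_cases h : ∃ y, s(x, y) ∈ M
  · rw [if_pos h, if_pos h]
    have hadj : G.Adj x (mfn M x) := mfn_adj hM h
    have hne : φ x (mfn M x) ≠ 0 := by
      intro hc
      have := hg.unit x (mfn M x) hadj
      rw [hc] at this
      simpa using this
    rw [gainAdj_adj hadj.symm, hg.inv x _ hadj, mul_inv_cancel₀ hne]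
  · rw [if_neg h, if_neg h]

lemma trace_mUA : Matrix.trace (mU M φ * gainAdj G φ) = ((2 * M.card : ℝ) : ℂ) := by
  classical
  rw [Matrix.trace]
  simp only [Matrix.diag]
  rw [Finset.sum_congr rfl (fun x _ => mUA_diag hM hg x), Finset.sum_boole,
    card_matched hM]
  push_cast
  ring

end UMatrix

section Spectral
variable [Fintype V] [DecidableEq V] {G : SimpleGraph V} {φ : V → V → ℂ}
  {M : Finset (Sym2 V)}

/-- The contraction bound for the matching matrix: `‖U v‖² ≤ ‖v‖²`. -/
lemma mU_contract (hM : IsGraphMatching G M) (hg : IsGain G φ) (v : V → ℂ) :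
    ∑ i, Complex.normSq ((mU M φ *ᵥ v) i) ≤ ∑ i, Complex.normSq (v i) := by
  classical
  have hrow : ∀ i : V, (mU M φ *ᵥ v) i =
      if ∃ y, s(i, y) ∈ M then φ i (mfn M i) * v (mfn M i) else 0 := by
    intro i
    rw [show (mU M φ *ᵥ v) i = ∑ z, mU M φ i z * v z by
      simp [Matrix.mulVec, dotProduct]]
    exact mU_row hM v i
  have step1 : ∑ i, Complex.normSq ((mU M φ *ᵥ v) i) =
      ∑ i with (∃ y, s(i, y) ∈ M), Complex.normSq (v (mfn M i)) := by
    rw [Finset.sum_filter]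
    refine Finset.sum_congr rfl fun i _ => ?_
    rw [hrow i]
    by_cases h : ∃ y, s(i, y) ∈ M
    · rw [if_pos h, if_pos h, Complex.normSq_mul]
      have : Complex.normSq (φ i (mfn M i)) = 1 := by
        rw [← Complex.sq_norm, hg.unit _ _ (mfn_adj hM h), one_pow]
      rw [this, one_mul]
    · rw [if_neg h, if_neg h, Complex.normSq_zero]
  rw [step1]
  have step2 : ∑ i with (∃ y, s(i, y) ∈ M), Complex.normSq (v (mfn M i)) =
      ∑ i with (∃ y, s(i, y) ∈ M), Complex.normSq (v i) := by
    refine Finset.sum_nbij' (mfn M) (mfn M) ?_ ?_ ?_ ?_ ?_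
    · intro a ha
      simp only [Finset.mem_filter, Finset.mem_univ, true_and] at ha ⊢
      exact matched_mfn hM ha
    · intro a ha
      simp only [Finset.mem_filter, Finset.mem_univ, true_and] at ha ⊢
      exact matched_mfn hM ha
    · intro a ha
      simp only [Finset.mem_filter, Finset.mem_univ, true_and] at ha
      exact mfn_invol hM ha
    · intro a ha
      simp only [Finset.mem_filter, Finset.mem_univ, true_and] at ha
      exact mfn_invol hM ha
    · intro a _
      rfl
  rw [step2]
  exact Finset.sum_le_sum_of_subset_of_nonneg (Finset.filter_subset _ _)
    (fun i _ _ => Complex.normSq_nonneg _)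

/-- The central identity: when the energy equals twice the size of the matching,
`U * A` is the positive semidefinite part of `A`. -/
lemma key_identity (hg : IsGain G φ) (hM : IsGraphMatching G M)
    (hE : ∑ j, |hg.isHermitian.eigenvalues j| = 2 * M.card) :
    mU M φ * gainAdj G φ =
      (hg.isHermitian.eigenvectorUnitary : Matrix V V ℂ) *
        Matrix.diagonal (fun j => ((|hg.isHermitian.eigenvalues j| : ℝ) : ℂ)) *
        (hg.isHermitian.eigenvectorUnitary : Matrix V V ℂ)ᴴ := by
  classical
  set A := gainAdj G φ with hAdef
  set U := mU M φ with hUdef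
  have hA := hg.isHermitian
  set lam := hA.eigenvalues with hlam
  set W := (hA.eigenvectorUnitary : Matrix V V ℂ) with hW
  set x : V → V → ℂ := fun j => ⇑(hA.eigenvectorBasis j) with hx
  have hWx : ∀ i j, W i j = x j i := fun i j => rfl
  have hAx : ∀ j, A *ᵥ x j = lam j • x j := fun j => hA.mulVec_eigenvectorBasis j
  -- ℓ² norm of eigenvectors
  have hxnorm : ∀ j, ∑ i, Complex.normSq (x j i) = 1 := by
    intro j
    have h1 : ‖hA.eigenvectorBasis j‖ = 1 := hA.eigenvectorBasis.orthonormal.1 j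
    rw [EuclideanSpace.norm_eq] at h1
    rw [Real.sqrt_eq_one] at h1
    rw [← h1]
    exact Finset.sum_congr rfl fun i _ => by
      exact (Complex.sq_norm _).symm
  -- the diagonal coefficients
  set t : V → ℂ := fun j => ∑ i, starRingEnd ℂ (x j i) * (U *ᵥ x j) i with ht
  -- trace identity
  have htr : Matrix.trace (U * A) = ∑ j, t j * (lam j : ℂ) := by
    have hspec : A = W * Matrix.diagonal (RCLike.ofReal ∘ lam) * star W :=
      hA.spectral_theorem
    rw [hspec]
    rw [show U * (W * Matrix.diagonal (RCLike.ofReal ∘ lam) * star W)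
        = (U * W * Matrix.diagonal (RCLike.ofReal ∘ lam)) * star W from by
      noncomm_ring]
    rw [Matrix.trace_mul_comm]
    rw [show star W * (U * W * Matrix.diagonal (RCLike.ofReal ∘ lam))
        = (star W * (U * W)) * Matrix.diagonal (RCLike.ofReal ∘ lam) from by
      noncomm_ring]
    rw [Matrix.trace]
    refine Finset.sum_congr rfl fun j _ => ?_
    rw [Matrix.diag_apply, Matrix.mul_diagonal]
    have h1 : (star W * (U * W)) j j = t j := by
      rw [Matrix.mul_apply]
      refine Finset.sum_congr rfl fun i _ => ?_
      rw [Matrix.star_eq_conjTranspose, Matrix.conjTranspose_apply, hWx i j]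
      have h2 : (U * W) i j = (U *ᵥ x j) i := by
        rw [Matrix.mul_apply]
        simp only [Matrix.mulVec, dotProduct]
        exact Finset.sum_congr rfl fun k _ => by rw [hWx k j]
      rw [h2]
      rfl
    rw [h1]
    rfl
  -- |t j| ≤ 1
  have htle : ∀ j, ‖t j‖ ≤ 1 := by
    intro j
    set b : EuclideanSpace ℂ V := (WithLp.equiv 2 _).symm (U *ᵥ x j) with hb
    have hinner : (inner ℂ (hA.eigenvectorBasis j) b : ℂ) = t j := by
      rw [PiLp.inner_apply]
      exact Finset.sum_congr rfl fun i _ => by rw [RCLike.inner_apply, mul_comm]; rfl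
    have hnb : ‖b‖ ≤ 1 := by
      rw [EuclideanSpace.norm_eq]
      have : ∑ i, ‖b i‖ ^ 2 ≤ 1 := by
        have h2 := mU_contract hM hg (x j)
        rw [hxnorm j] at h2
        refine le_trans (le_of_eq ?_) h2
        exact Finset.sum_congr rfl fun i _ => by
          exact Complex.sq_norm _
      calc √(∑ i, ‖b i‖ ^ 2) ≤ √1 := Real.sqrt_le_sqrt this
        _ = 1 := Real.sqrt_one
    calc ‖t j‖ = ‖(inner ℂ (hA.eigenvectorBasis j) b : ℂ)‖ := by
          rw [hinner]
      _ ≤ ‖hA.eigenvectorBasis j‖ * ‖b‖ := norm_inner_le_norm _ _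
      _ ≤ 1 * 1 := by
          refine mul_le_mul ?_ hnb (norm_nonneg _) zero_le_one
          rw [hA.eigenvectorBasis.orthonormal.1 j]
      _ = 1 := one_mul 1
  -- pointwise equality of real parts
  have hre : ∀ j, (t j).re * lam j = |lam j| := by
    have hsum : ∑ j, (t j).re * lam j = ∑ j, |lam j| := by
      have h1 : Matrix.trace (U * A) = ((2 * M.card : ℝ) : ℂ) := trace_mUA hM hg
      have h2 : (∑ j, t j * (lam j : ℂ)).re = 2 * M.card := by
        rw [← htr, h1, Complex.ofReal_re]
      rw [Complex.re_sum] at h2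
      have h3 : ∀ j, (t j * (lam j : ℂ)).re = (t j).re * lam j := by
        intro j
        rw [Complex.mul_re, Complex.ofReal_re, Complex.ofReal_im]
        ring
      rw [Finset.sum_congr rfl fun j _ => h3 j] at h2
      rw [h2, hE]
    have hle : ∀ j ∈ Finset.univ, (t j).re * lam j ≤ |lam j| := by
      intro j _
      calc (t j).re * lam j ≤ |(t j).re * lam j| := le_abs_self _
        _ = |(t j).re| * |lam j| := abs_mul _ _
        _ ≤ 1 * |lam j| := by
            refine mul_le_mul_of_nonneg_right ?_ (abs_nonneg _)
            calc |(t j).re| ≤ ‖t j‖ := Complex.abs_re_le_norm _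
              _ ≤ 1 := htle j
        _ = |lam j| := one_mul _
    intro j
    exact (Finset.sum_eq_sum_iff_of_le hle).mp hsum j (Finset.mem_univ j)
  -- the sign
  set σ : V → ℝ := fun j => if 0 ≤ lam j then 1 else -1 with hσ
  have hσlam : ∀ j, lam j * σ j = |lam j| := by
    intro j
    by_cases h : 0 ≤ lam j
    · rw [hσ]; simp only [if_pos h]; rw [mul_one, abs_of_nonneg h]
    · rw [hσ]; simp only [if_neg h]; rw [abs_of_neg (lt_of_not_ge h)]; ring
  -- eigenvector equation for U
  have hUx : ∀ j, lam j ≠ 0 → ∀ i, (U *ᵥ x j) i = (σ j : ℂ) * x j i := by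
    intro j hj
    have htre : (t j).re = σ j := by
      have h0 := hre j
      rw [← hσlam j] at h0
      have h' : (t j).re * lam j = σ j * lam j := by rw [h0]; ring
      exact mul_right_cancel₀ hj h' 
    set w : V → ℂ := fun i => (U *ᵥ x j) i with hw
    have hkey : ∑ i, Complex.normSq (w i - (σ j : ℂ) * x j i) = 0 := by
      have hexp : ∀ i, Complex.normSq (w i - (σ j : ℂ) * x j i) =
          Complex.normSq (w i) + (σ j)^2 * Complex.normSq (x j i)
            - 2 * σ j * (starRingEnd ℂ (x j i) * w i).re := by
        intro i
        rw [Complex.normSq_sub]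
        congr 1
        · congr 1
          rw [Complex.normSq_mul, Complex.normSq_ofReal]
          ring
        · rw [_root_.map_mul, Complex.conj_ofReal]
          have : w i * ((σ j : ℂ) * starRingEnd ℂ (x j i))
              = (σ j : ℂ) * (starRingEnd ℂ (x j i) * w i) := by ring
          rw [this]
          rw [Complex.re_ofReal_mul]
          ring
      have hσ2 : σ j * σ j = 1 := by
        by_cases h : 0 ≤ lam j <;> simp [hσ, h]
      have hret : (t j).re = ∑ i, (starRingEnd ℂ (x j i) * w i).re :=
        Complex.re_sum _ _
      have hsum : ∑ i, Complex.normSq (w i - (σ j : ℂ) * x j i)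
          = (∑ i, Complex.normSq (w i)) + (σ j) ^ 2 - 2 * σ j * (t j).re := by
        rw [Finset.sum_congr rfl fun i _ => hexp i, Finset.sum_sub_distrib,
          Finset.sum_add_distrib, ← Finset.mul_sum, hxnorm j, ← Finset.mul_sum, hret]
        ring
      have hcontr : ∑ i, Complex.normSq (w i) ≤ 1 := by
        have h2 := mU_contract hM hg (x j)
        rwa [hxnorm j] at h2
      have hge : 0 ≤ ∑ i, Complex.normSq (w i - (σ j : ℂ) * x j i) :=
        Finset.sum_nonneg fun i _ => Complex.normSq_nonneg _
      rw [hsum, htre, pow_two]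
      rw [hsum, htre, pow_two] at hge
      linarith [hcontr, hσ2]
    intro i
    have h0 : Complex.normSq (w i - (σ j : ℂ) * x j i) = 0 :=
      (Finset.sum_eq_zero_iff_of_nonneg (fun i _ => Complex.normSq_nonneg _)).mp hkey i
        (Finset.mem_univ i)
    have := Complex.normSq_eq_zero.mp h0
    exact sub_eq_zero.mp this
  -- column identity
  have hcol : (U * A) * W = W * Matrix.diagonal (fun j => ((|lam j| : ℝ) : ℂ)) := by
    ext i j
    rw [Matrix.mul_diagonal, Matrix.mul_apply]
    have hcolW : (∑ k, (U * A) i k * W k j) = ((U * A) *ᵥ x j) i := by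
      simp only [Matrix.mulVec, dotProduct]
      exact Finset.sum_congr rfl fun k _ => by rw [hWx k j]
    rw [hcolW, ← Matrix.mulVec_mulVec, hAx j, Matrix.mulVec_smul]
    by_cases hj : lam j = 0
    · rw [hj]
      simp [hWx i j]
    · have := hUx j hj
      rw [Pi.smul_apply, show (U *ᵥ x j) i = (σ j : ℂ) * x j i from this i,
        Complex.real_smul, hWx i j]
      rw [show ((lam j : ℂ)) * ((σ j : ℂ) * x j i) = ((lam j * σ j : ℝ) : ℂ) * x j i by
        push_cast; ring, hσlam j]
      ring
  -- conclude
  have huni : W * star W = 1 := Matrix.mem_unitaryGroup_iff.mp hA.eigenvectorUnitary.2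
  calc U * A = ((U * A) * W) * star W := by
        rw [mul_assoc, huni, mul_one]
    _ = W * Matrix.diagonal (fun j => ((|lam j| : ℝ) : ℂ)) * Wᴴ := by
        rw [hcol, Matrix.star_eq_conjTranspose]

end Spectral

section Structure
variable [Fintype V] [DecidableEq V] {G : SimpleGraph V} {φ : V → V → ℂ}
  {M : Finset (Sym2 V)}

lemma diag_herm_aux (d : V → ℝ) :
    (Matrix.diagonal (fun j => ((d j : ℝ) : ℂ)))ᴴ
      = Matrix.diagonal (fun j => ((d j : ℝ) : ℂ)) := by
  rw [Matrix.diagonal_conjTranspose]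
  exact congrArg Matrix.diagonal (funext fun j => by
    rw [Pi.star_apply]; exact Complex.conj_ofReal _)

lemma AU_comm (hg : IsGain G φ) (hM : IsGraphMatching G M)
    (hE : ∑ j, |hg.isHermitian.eigenvalues j| = 2 * M.card) :
    gainAdj G φ * mU M φ = mU M φ * gainAdj G φ := by
  have hKI := key_identity hg hM hE
  have h1 : (mU M φ * gainAdj G φ)ᴴ = gainAdj G φ * mU M φ := by
    rw [Matrix.conjTranspose_mul, hg.isHermitian, mU_hermitian hM hg]
  have h2 : (mU M φ * gainAdj G φ)ᴴ = mU M φ * gainAdj G φ := by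
    rw [hKI, Matrix.conjTranspose_mul, Matrix.conjTranspose_mul,
      Matrix.conjTranspose_conjTranspose, diag_herm_aux fun j => |hg.isHermitian.eigenvalues j|]
    noncomm_ring
  rw [← h1, h2]

lemma gram_decomp (hg : IsGain G φ) (hM : IsGraphMatching G M)
    (hE : ∑ j, |hg.isHermitian.eigenvalues j| = 2 * M.card) :
    ∃ B : Matrix V V ℂ, mU M φ * gainAdj G φ = Bᴴ * B := by
  refine ⟨Matrix.diagonal (fun j => ((Real.sqrt |hg.isHermitian.eigenvalues j| : ℝ) : ℂ)) *
    (hg.isHermitian.eigenvectorUnitary : Matrix V V ℂ)ᴴ, ?_⟩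
  rw [key_identity hg hM hE, Matrix.conjTranspose_mul, Matrix.conjTranspose_conjTranspose,
    diag_herm_aux fun j => Real.sqrt |hg.isHermitian.eigenvalues j|]
  rw [show ∀ X D1 D2 : Matrix V V ℂ, X * D1 * (D2 * Xᴴ) = X * (D1 * D2) * Xᴴ from
    fun X D1 D2 => by noncomm_ring]
  have hdd : Matrix.diagonal (fun j => ((Real.sqrt |hg.isHermitian.eigenvalues j| : ℝ) : ℂ)) *
      Matrix.diagonal (fun j => ((Real.sqrt |hg.isHermitian.eigenvalues j| : ℝ) : ℂ)) =
      Matrix.diagonal (fun j => ((|hg.isHermitian.eigenvalues j| : ℝ) : ℂ)) := by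
    rw [Matrix.diagonal_mul_diagonal]
    exact congrArg Matrix.diagonal (funext fun j => by
      rw [← Complex.ofReal_mul, Real.mul_self_sqrt (abs_nonneg _)])
  rw [hdd]

end Structure

section WalkAux
variable {G : SimpleGraph V}

lemma walkGain_nil {φ : V → V → ℂ} {a : V} :
    walkGain φ (SimpleGraph.Walk.nil : G.Walk a a) = 1 := rfl

lemma walkGain_cons {φ : V → V → ℂ} {a b c : V} (h : G.Adj a b) (q : G.Walk b c) :
    walkGain φ (SimpleGraph.Walk.cons h q) = φ a b * walkGain φ q := by
  simp [walkGain, SimpleGraph.Walk.darts_cons]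

lemma walk_even_iff (C : G.Coloring (Fin 2)) {a b : V} (p : G.Walk a b) :
    Even p.length ↔ C a = C b := by
  induction p with
  | nil => simp
  | @cons a b' c h q ih =>
    rw [SimpleGraph.Walk.length_cons, Nat.even_add_one, ih]
    have hne : C a ≠ C b' := C.valid h
    exact (by decide : ∀ u u' u'' : Fin 2, u ≠ u' → (¬ u' = u'' ↔ u = u'')) _ _ _ hne

lemma exists_adj_of_connected (hconn : G.Connected) [Fintype V]
    (hcard : 2 ≤ Fintype.card V) (x : V) : ∃ z, G.Adj x z := by
  obtain ⟨y, hy⟩ := Fintype.exists_ne_of_one_lt_card (by omega) x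
  obtain ⟨p⟩ := hconn.preconnected x y
  cases p with
  | nil => exact absurd rfl hy
  | cons h q => exact ⟨_, h⟩

end WalkAux

/-- if the underlying graph is connected and bipartite with at least two
vertices, and the energy equals twice the matching number, then the gain graph is balanced. -/
theorem isBalanced_of_gainEnergy_eq [Fintype V] [DecidableEq V]
    (G : SimpleGraph V) (φ : V → V → ℂ) (hg : IsGain G φ)
    (hconn : G.Connected) (hbip : G.Colorable 2) (hcard : 2 ≤ Fintype.card V)
    (hE : gainEnergy G φ hg = 2 * (matchingNumber G : ℝ)) :
    IsBalanced G φ := by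
  classical
  -- a maximum matching
  have h0S : 0 ∈ {n | ∃ M : Finset (Sym2 V), IsGraphMatching G M ∧ M.card = n} :=
    ⟨∅, ⟨by simp, fun e he => absurd he (Finset.notMem_empty e)⟩, rfl⟩
  have hbdd : BddAbove {n | ∃ M : Finset (Sym2 V), IsGraphMatching G M ∧ M.card = n} := by
    refine ⟨Fintype.card (Sym2 V), ?_⟩
    rintro n ⟨M, -, rfl⟩
    exact Finset.card_le_univ M
  obtain ⟨M, hM, hMcard⟩ := Nat.sSup_mem ⟨0, h0S⟩ hbdd
  have hMcard' : M.card = matchingNumber G := hMcard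
  have hE' : ∑ j, |hg.isHermitian.eigenvalues j| = 2 * M.card := by
    have h1 : gainEnergy G φ hg = ∑ j, |hg.isHermitian.eigenvalues j| := rfl
    rw [h1] at hE
    rw [hE, hMcard']
  have hcomm := AU_comm hg hM hE'
  obtain ⟨B, hB⟩ := gram_decomp hg hM hE'
  -- entry formulas
  have hProw : ∀ x y, (mU M φ * gainAdj G φ) x y =
      if ∃ w, s(x, w) ∈ M then φ x (mfn M x) * gainAdj G φ (mfn M x) y else 0 := by
    intro x y
    rw [Matrix.mul_apply]
    exact mU_row hM (fun z => gainAdj G φ z y) x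
  have hPcol : ∀ x y, (mU M φ * gainAdj G φ) x y =
      if ∃ w, s(y, w) ∈ M then gainAdj G φ x (mfn M y) * φ (mfn M y) y else 0 := by
    intro x y
    rw [← hcomm, Matrix.mul_apply]
    exact mU_col hM (fun z => gainAdj G φ x z) y
  have hφne : ∀ x y, G.Adj x y → φ x y ≠ 0 := by
    intro x y h hc
    have := hg.unit x y h
    rw [hc] at this
    simpa using this
  -- every vertex is matched
  have hmat : ∀ x : V, ∃ w, s(x, w) ∈ M := by
    by_contra hc
    push_neg at hc
    obtain ⟨x, hx⟩ := hc
    have hxnm : ¬ ∃ w, s(x, w) ∈ M := by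
      rintro ⟨w, hw⟩
      exact hx w hw
    have hAz : ∀ z, (∃ w, s(z, w) ∈ M) → gainAdj G φ x z = 0 := by
      intro z hz
      have h1 : (mU M φ * gainAdj G φ) x (mfn M z) = 0 := by
        rw [hProw, if_neg hxnm]
      have h2 := hPcol x (mfn M z)
      rw [if_pos (matched_mfn hM hz), mfn_invol hM hz, h1] at h2
      have hφ := hφne z (mfn M z) (mfn_adj hM hz)
      have hφ' : φ (mfn M z) z ≠ 0 := by
        rw [hg.inv z (mfn M z) (mfn_adj hM hz)]
        exact inv_ne_zero hφ
      exact (mul_eq_zero.mp h2.symm).resolve_right hφ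
    obtain ⟨z, hz⟩ := exists_adj_of_connected hconn hcard x
    have hznm : ¬ ∃ w, s(z, w) ∈ M := by
      intro hzm
      have h1 := hAz z hzm
      rw [gainAdj_adj hz] at h1
      exact hφne x z hz h1
    have haux : ∀ (c : V) (g : Sym2 V), g ∈ M → c ∈ g → ∃ w, s(c, w) ∈ M := by
      intro c g hgM hcg
      induction g using Sym2.ind with
      | _ a b =>
        rcases Sym2.mem_iff.mp hcg with rfl | rfl
        · exact ⟨b, hgM⟩
        · exact ⟨a, by rwa [Sym2.eq_swap]⟩
    have hnewM : IsGraphMatching G (insert s(x, z) M) := by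
      constructor
      · intro e he
        rcases Finset.mem_insert.mp he with rfl | heM
        · exact G.mem_edgeSet.mpr hz
        · exact hM.1 heM
      · intro e he f hf hef u hu huf
        rcases Finset.mem_insert.mp he with rfl | heM <;>
          rcases Finset.mem_insert.mp hf with hf' | hfM
        · exact hef hf'.symm
        · rcases Sym2.mem_iff.mp hu with rfl | rfl
          · exact hxnm (haux u f hfM huf)
          · exact hznm (haux u f hfM huf)
        · subst hf'
          rcases Sym2.mem_iff.mp huf with rfl | rfl
          · exact hxnm (haux u e heM hu)
          · exact hznm (haux u e heM hu)
        · exact hM.2 e heM f hfM hef u hu huf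
    have hxz_nm : s(x, z) ∉ M := fun hcon => hxnm ⟨z, hcon⟩
    have hmem : M.card + 1 ∈ {n | ∃ M : Finset (Sym2 V), IsGraphMatching G M ∧ M.card = n} :=
      ⟨insert s(x, z) M, hnewM, Finset.card_insert_of_notMem hxz_nm⟩
    have hle := le_csSup hbdd hmem
    have : sSup {n | ∃ M : Finset (Sym2 V), IsGraphMatching G M ∧ M.card = n} = M.card :=
      hMcard'.symm
    omega
  -- global entry formulas
  have hProw' : ∀ x y, (mU M φ * gainAdj G φ) x y
      = φ x (mfn M x) * gainAdj G φ (mfn M x) y :=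
    fun x y => by rw [hProw, if_pos (hmat x)]
  have hPcol' : ∀ x y, (mU M φ * gainAdj G φ) x y
      = gainAdj G φ x (mfn M y) * φ (mfn M y) y :=
    fun x y => by rw [hPcol, if_pos (hmat y)]
  have hPdiag : ∀ x, (mU M φ * gainAdj G φ) x x = 1 :=
    fun x => by rw [mUA_diag hM hg x, if_pos (hmat x)]
  have hPconj : ∀ x y, (mU M φ * gainAdj G φ) y x
      = starRingEnd ℂ ((mU M φ * gainAdj G φ) x y) := by
    intro x y
    rw [hB]
    exact gram_conj B x y
  have hPmul : ∀ a b z : V, ‖(mU M φ * gainAdj G φ) a b‖ = 1 →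
      (mU M φ * gainAdj G φ) z b
        = (mU M φ * gainAdj G φ) a b * (mU M φ * gainAdj G φ) z a := by
    intro a b z hab
    have ha := hPdiag a
    have hb' := hPdiag b
    rw [hB] at ha hb' hab ⊢
    exact gram_entry_mul ha hb' hab z
  have hT : ∀ a b c : V, ‖(mU M φ * gainAdj G φ) a b‖ = 1 →
      ‖(mU M φ * gainAdj G φ) b c‖ = 1 →
      ‖(mU M φ * gainAdj G φ) a c‖ = 1 := by
    intro a b c hab hbc
    have h1 := hPmul a b c hab
    have h2 := congrArg norm h1
    rw [norm_mul, hab, one_mul] at h2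
    have h3 : ‖(mU M φ * gainAdj G φ) c b‖ = 1 := by
      rw [hPconj, Complex.norm_conj]
      exact hbc
    rw [h3] at h2
    rw [hPconj, Complex.norm_conj]
    exact h2.symm
  -- gain adjacency via P
  have hAP : ∀ x y, gainAdj G φ x y
      = φ x (mfn M x) * (mU M φ * gainAdj G φ) (mfn M x) y := by
    intro x y
    have h1 := hProw' (mfn M x) y
    rw [mfn_invol hM (hmat x)] at h1
    have hadj := mfn_adj hM (hmat x)
    have hinv : φ (mfn M x) x = (φ x (mfn M x))⁻¹ := hg.inv x (mfn M x) hadj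
    have hne := hφne x (mfn M x) hadj
    rw [h1, hinv]
    field_simp
  have hE1 : ∀ x y, G.Adj x y →
      ‖(mU M φ * gainAdj G φ) (mfn M x) y‖ = 1 := by
    intro x y hxy
    have h1 := hAP x y
    rw [gainAdj_adj hxy] at h1
    have h2 := congrArg norm h1
    rw [norm_mul, hg.unit x y hxy, hg.unit x (mfn M x) (mfn_adj hM (hmat x)), one_mul] at h2
    exact h2.symm
  have hIV : ∀ a b, ‖(mU M φ * gainAdj G φ) (mfn M a) (mfn M b)‖
      = ‖(mU M φ * gainAdj G φ) a b‖ := by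
    intro a b
    have h1 := hProw' (mfn M a) (mfn M b)
    rw [mfn_invol hM (hmat a)] at h1
    have h2 := hPcol' a b
    have habs1 := congrArg norm h1
    have habs2 := congrArg norm h2
    rw [norm_mul, hg.unit (mfn M a) a (mfn_adj hM (hmat a)).symm, one_mul] at habs1
    rw [norm_mul, hg.unit (mfn M b) b (mfn_adj hM (hmat b)).symm, mul_one] at habs2
    rw [habs1, ← habs2]
  -- now the walk argument
  intro v w _
  obtain ⟨C⟩ := hbip
  have heven : Even w.length := (walk_even_iff C w).mpr rfl
  set c1 : V → Prop := fun x => ‖(mU M φ * gainAdj G φ) v x‖ = 1 with hc1def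
  set c2 : V → Prop :=
    fun x => ‖(mU M φ * gainAdj G φ) (mfn M v) x‖ = 1 with hc2def
  set sf : V → ℂ :=
    fun x => φ x (mfn M x) *
      starRingEnd ℂ ((mU M φ * gainAdj G φ) (mfn M v) (mfn M x)) with hsfdef
  set bf : V → ℂ := fun y => (mU M φ * gainAdj G φ) (mfn M v) y with hbfdef
  have hc1v : c1 v := by
    rw [hc1def]
    simp only [hPdiag v]
    simp
  have hsabs : ∀ x, c1 x → ‖sf x‖ = 1 := by
    intro x hx
    rw [hsfdef]
    simp only []
    rw [norm_mul, hg.unit x (mfn M x) (mfn_adj hM (hmat x)), Complex.norm_conj, hIV, one_mul]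
    exact hx
  have hsu : ∀ x, c1 x → sf x * starRingEnd ℂ (sf x) = 1 := by
    intro x hx
    rw [Complex.mul_conj]
    norm_cast
    rw [← Complex.sq_norm, hsabs x hx, one_pow]
  have hbu : ∀ y, c2 y → bf y * starRingEnd ℂ (bf y) = 1 := by
    intro y hy
    rw [Complex.mul_conj]
    norm_cast
    rw [← Complex.sq_norm]
    rw [hc2def] at hy
    rw [hbfdef]
    simp only []
    rw [hy, one_pow]
  have stepA : ∀ x y, c1 x → G.Adj x y → c2 y := by
    intro x y hx hxy
    have h1 : ‖(mU M φ * gainAdj G φ) (mfn M v) (mfn M x)‖ = 1 := by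
      rw [hIV]
      exact hx
    exact hT (mfn M v) (mfn M x) y h1 (hE1 x y hxy)
  have stepB : ∀ x y, c2 x → G.Adj x y → c1 y := by
    intro x y hx hxy
    have h1 : ‖(mU M φ * gainAdj G φ) v (mfn M x)‖ = 1 := by
      have := hIV (mfn M v) x
      rw [mfn_invol hM (hmat v)] at this
      rw [this]
      exact hx
    exact hT v (mfn M x) y h1 (hE1 x y hxy)
  have hL3 : ∀ x y, c1 x → gainAdj G φ x y = sf x * bf y := by
    intro x y hx
    have habs : ‖(mU M φ * gainAdj G φ) (mfn M v) (mfn M x)‖ = 1 := by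
      rw [hIV]
      exact hx
    have h1 := hPmul (mfn M v) (mfn M x) y habs
    rw [hPconj (mfn M x) y, hPconj (mfn M v) y] at h1
    have h3 := congrArg (starRingEnd ℂ) h1
    simp only [_root_.map_mul, Complex.conj_conj] at h3
    rw [hAP x y, h3, hsfdef, hbfdef]
    ring
  -- the walk induction
  have main : ∀ (x z : V) (p : G.Walk x z), z = v →
      (Even p.length → c1 x ∧ walkGain φ p = sf x * starRingEnd ℂ (sf v)) ∧
      (Odd p.length → c2 x ∧ walkGain φ p
        = starRingEnd ℂ (bf x) * starRingEnd ℂ (sf v)) := by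
    intro x z p
    induction p with
    | nil =>
      intro hz
      subst hz
      constructor
      · intro _
        refine ⟨hc1v, ?_⟩
        rw [walkGain_nil]
        exact (hsu _ hc1v).symm
      · intro hodd
        simp only [SimpleGraph.Walk.length_nil] at hodd
        exact absurd hodd (by simp)
    | @cons a b vv h q ih' =>
      intro hz
      subst hz
      have ih := ih' rfl
      constructor
      · intro hev
        rw [SimpleGraph.Walk.length_cons, Nat.even_add_one] at hev
        have hodd : Odd q.length := Nat.not_even_iff_odd.mp hev
        obtain ⟨hc2b, hgq⟩ := ih.2 hodd
        have hc1a : c1 a := stepB b a hc2b h.symm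
        refine ⟨hc1a, ?_⟩
        rw [walkGain_cons (φ := φ) h q, hgq]
        have hφab : φ a b = sf a * bf b := by
          rw [← gainAdj_adj (φ := φ) h]
          exact hL3 a b hc1a
        rw [hφab]
        linear_combination (sf a * starRingEnd ℂ (sf vv)) * hbu b hc2b
      · intro hoddp
        rw [SimpleGraph.Walk.length_cons] at hoddp
        have hev : Even q.length := by
          rcases Nat.even_or_odd q.length with he | ho
          · exact he
          · exfalso
            rw [Nat.odd_iff] at ho
            rw [Nat.odd_iff] at hoddp
            omega
        obtain ⟨hc1b, hgq⟩ := ih.1 hev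
        have hc2a : c2 a := stepA b a hc1b h.symm
        refine ⟨hc2a, ?_⟩
        rw [walkGain_cons (φ := φ) h q, hgq]
        have hφab : φ a b = starRingEnd ℂ (sf b * bf a) := by
          have h1 : gainAdj G φ b a = sf b * bf a := hL3 b a hc1b
          have h2 : gainAdj G φ a b = starRingEnd ℂ (gainAdj G φ b a) := by
            conv_lhs => rw [← hg.isHermitian]
            rw [Matrix.conjTranspose_apply]
            rfl
          rw [← gainAdj_adj (φ := φ) h, h2, h1]
        rw [hφab, _root_.map_mul]
        linear_combination (starRingEnd ℂ (bf a) * starRingEnd ℂ (sf vv)) * hsu b hc1b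
  obtain ⟨-, hgain⟩ := (main v v w rfl).1 heven
  rw [hgain]
  exact hsu v hc1v
end

section
/- Let K be the 4-cycle x₁y₁x₀y₀x₁ and let Φ = (K, 𝕋, φ) be a complex unit gain graph with φ(x₁,y₁) = φ(x₀,y₀) = 1, φ(y₁,x₀) = a, and φ(y₀,x₁) = b, where a, b ∈ 𝕋. Then, writing x = Re(ab), the energy of Φ equals 2√(2 + √(2 + 2x)) + 2√(2 − √(2 + 2x)), this quantity is at least 4, and it equals 4 if and only if x = 1 (equivalently, a = b̄). -/
open Matrix

variable {V : Type*}

/-- The 4-cycle `x₁ y₁ x₀ y₀ x₁`, with `x₁ = 0`, `y₁ = 1`, `x₀ = 2`, `y₀ = 3`. -/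
def cycle4 : SimpleGraph (Fin 4) :=
  SimpleGraph.fromRel fun u v =>
    (u, v) ∈ ([(0, 1), (1, 2), (2, 3), (3, 0)] : List (Fin 4 × Fin 4))

lemma gainAdj_pos {G : SimpleGraph V} {φ : V → V → ℂ} {u v : V} (h : G.Adj u v) :
    gainAdj G φ u v = φ u v := if_pos h

lemma gainAdj_neg {G : SimpleGraph V} {φ : V → V → ℂ} {u v : V} (h : ¬ G.Adj u v) :
    gainAdj G φ u v = 0 := if_neg h

lemma aux_sq (a b a' b' : ℂ) (haa : a * a' = 1) (hbb : b * b' = 1) :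
    (!![0, 1, 0, b'; 1, 0, a, 0; 0, a', 0, 1; b, 0, 1, 0] *
      !![0, 1, 0, b'; 1, 0, a, 0; 0, a', 0, 1; b, 0, 1, 0] : Matrix (Fin 4) (Fin 4) ℂ) =
    !![2, 0, a + b', 0; 0, 2, 0, a + b'; a' + b, 0, 2, 0; 0, a' + b, 0, 2] := by
  ext i j
  fin_cases i <;> fin_cases j <;>
    simp [Matrix.mul_apply, Fin.sum_univ_four] <;>
    first
      | ring1
      | linear_combination haa | linear_combination hbb
      | linear_combination haa + hbb

lemma aux_four (a b a' b' : ℂ) (c : ℂ) (hcd : (a + b') * (a' + b) = c) :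
    (!![2, 0, a + b', 0; 0, 2, 0, a + b'; a' + b, 0, 2, 0; 0, a' + b, 0, 2] *
      !![2, 0, a + b', 0; 0, 2, 0, a + b'; a' + b, 0, 2, 0; 0, a' + b, 0, 2] : Matrix (Fin 4) (Fin 4) ℂ) =
    (4:ℂ) • !![2, 0, a + b', 0; 0, 2, 0, a + b'; a' + b, 0, 2, 0; 0, a' + b, 0, 2] -
      ((4:ℂ) - c) • (1 : Matrix (Fin 4) (Fin 4) ℂ) := by
  ext i j
  fin_cases i <;> fin_cases j <;>
    simp [Matrix.mul_apply, Fin.sum_univ_four, Matrix.one_apply, smul_eq_mul] <;>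
    first
      | ring1
      | linear_combination hcd
      | linear_combination (-1) * hcd

lemma aux_real (s p q : ℝ) (hs0 : 0 ≤ s) (hp2 : p ^ 2 = 2 + s) (hq2 : q ^ 2 = 2 - s)
    (hp0 : 0 ≤ p) (hq0 : 0 ≤ q) :
    4 ≤ 2 * p + 2 * q ∧ (2 * p + 2 * q = 4 → s = 2) ∧ (s = 2 → 2 * p + 2 * q = 4) := by
  refine ⟨?_, ?_, ?_⟩
  · nlinarith [mul_nonneg hp0 hq0, sq_nonneg (p + q - 2), sq_nonneg (p - q)]
  · intro h
    have hpq : p * q = 0 := by nlinarith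
    have hppos : 0 < p := by nlinarith
    have hq00 : q = 0 := (mul_eq_zero.mp hpq).resolve_left (ne_of_gt hppos)
    have h0 : (0:ℝ) ^ 2 = 2 - s := hq00 ▸ hq2
    norm_num at h0
    linarith
  · intro h
    have hq00 : q = 0 := by
      have hq' : q ^ 2 = 0 := by rw [hq2, h]; ring
      exact pow_eq_zero_iff (by norm_num) |>.mp hq'
    have hfac : (p - 2) * (p + 2) = 0 := by linear_combination hp2 + h
    rcases mul_eq_zero.mp hfac with h' | h'
    · have hp22 : p = 2 := by linarith
      rw [hp22, hq00]; ring
    · linarith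

/-- for the gain 4-cycle with gains `1, a, 1, b` along
`x₁y₁, y₁x₀, x₀y₀, y₀x₁`, the energy equals
`2√(2 + √(2 + 2x)) + 2√(2 − √(2 + 2x))` where `x = Re (a * b)`; this is at least `4`,
with equality iff `x = 1`, equivalently `a = conj b`. -/
theorem gainEnergy_cycle4 (φ : Fin 4 → Fin 4 → ℂ) (hg : IsGain cycle4 φ)
    (a b : ℂ) (ha : ‖a‖ = 1) (hb : ‖b‖ = 1)
    (h01 : φ 0 1 = 1) (h23 : φ 2 3 = 1) (h12 : φ 1 2 = a) (h30 : φ 3 0 = b) :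
    gainEnergy cycle4 φ hg =
        2 * Real.sqrt (2 + Real.sqrt (2 + 2 * (a * b).re)) +
          2 * Real.sqrt (2 - Real.sqrt (2 + 2 * (a * b).re)) ∧
      4 ≤ gainEnergy cycle4 φ hg ∧
      (gainEnergy cycle4 φ hg = 4 ↔ (a * b).re = 1) ∧
      ((a * b).re = 1 ↔ a = (starRingEnd ℂ) b) := by
  classical
  set x := (a * b).re with hxdef
  have haa : a * (starRingEnd ℂ) a = 1 := by
    rw [Complex.mul_conj, Complex.normSq_eq_norm_sq, ha]; norm_num
  have hbb : b * (starRingEnd ℂ) b = 1 := by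
    rw [Complex.mul_conj, Complex.normSq_eq_norm_sq, hb]; norm_num
  have hab : ‖a * b‖ = 1 := by rw [norm_mul, ha, hb, one_mul]
  have hre : a * b + (starRingEnd ℂ) a * (starRingEnd ℂ) b = 2 * (x : ℂ) := by
    rw [← _root_.map_mul, Complex.add_conj, hxdef]; push_cast; ring
  have hcd : (a + (starRingEnd ℂ) b) * ((starRingEnd ℂ) a + b) = 2 + 2 * (x : ℂ) := by
    linear_combination haa + hbb + hre
  have hxabs : |x| ≤ 1 := by
    have h := Complex.abs_re_le_norm (a * b); rwa [hab, ← hxdef] at h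
  have hx_le : x ≤ 1 := (abs_le.mp hxabs).2
  have hx_ge : (-1 : ℝ) ≤ x := (abs_le.mp hxabs).1
  set s := Real.sqrt (2 + 2 * x) with hsdef
  have h22x : (0 : ℝ) ≤ 2 + 2 * x := by linarith
  have hs0 : 0 ≤ s := Real.sqrt_nonneg _
  have hs2 : s ^ 2 = 2 + 2 * x := Real.sq_sqrt h22x
  have hsle2 : s ≤ 2 := by nlinarith [hs2, hs0, hx_le]
  -- the adjacency matrix explicitly
  have adj01 : cycle4.Adj 0 1 := by simp [cycle4]
  have adj12 : cycle4.Adj 1 2 := by simp [cycle4]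
  have adj23 : cycle4.Adj 2 3 := by simp [cycle4]
  have adj30 : cycle4.Adj 3 0 := by simp [cycle4]
  have h10 : φ 1 0 = 1 := by rw [hg.inv 0 1 adj01, h01, inv_one]
  have h21 : φ 2 1 = (starRingEnd ℂ) a := by
    rw [hg.inv 1 2 adj12, h12, Complex.inv_eq_conj ha]
  have h32 : φ 3 2 = 1 := by rw [hg.inv 2 3 adj23, h23, inv_one]
  have h03 : φ 0 3 = (starRingEnd ℂ) b := by
    rw [hg.inv 3 0 adj30, h30, Complex.inv_eq_conj hb]
  have hAeq : gainAdj cycle4 φ =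
      !![0, 1, 0, (starRingEnd ℂ) b; 1, 0, a, 0;
         0, (starRingEnd ℂ) a, 0, 1; b, 0, 1, 0] := by
    ext i j
    fin_cases i <;> fin_cases j
    · exact (gainAdj_neg (by simp [cycle4])).trans (by simp)
    · exact (gainAdj_pos adj01).trans (by simp [h01])
    · exact (gainAdj_neg (by simp [cycle4])).trans (by simp)
    · exact (gainAdj_pos adj30.symm).trans (by simp [h03])
    · exact (gainAdj_pos adj01.symm).trans (by simp [h10])
    · exact (gainAdj_neg (by simp [cycle4])).trans (by simp)
    · exact (gainAdj_pos adj12).trans (by simp [h12])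
    · exact (gainAdj_neg (by simp [cycle4])).trans (by simp)
    · exact (gainAdj_neg (by simp [cycle4])).trans (by simp)
    · exact (gainAdj_pos adj12.symm).trans (by simp [h21])
    · exact (gainAdj_neg (by simp [cycle4])).trans (by simp)
    · exact (gainAdj_pos adj23).trans (by simp [h23])
    · exact (gainAdj_pos adj30).trans (by simp [h30])
    · exact (gainAdj_neg (by simp [cycle4])).trans (by simp)
    · exact (gainAdj_pos adj23.symm).trans (by simp [h32])
    · exact (gainAdj_neg (by simp [cycle4])).trans (by simp)
  have hM2 := aux_sq a b ((starRingEnd ℂ) a) ((starRingEnd ℂ) b) haa hbb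
  have hM4 := aux_four a b ((starRingEnd ℂ) a) ((starRingEnd ℂ) b) (2 + 2 * (x : ℂ)) hcd
  set μ : Fin 4 → ℝ := hg.isHermitian.eigenvalues with hμdef
  -- each eigenvalue squared is 2 ± s
  have key : ∀ i : Fin 4, μ i ^ 2 = 2 + s ∨ μ i ^ 2 = 2 - s := by
    intro i
    set v : Fin 4 → ℂ := ⇑(hg.isHermitian.eigenvectorBasis i) with hvdef
    have hv0 : v ≠ 0 := by
      have h := hg.isHermitian.eigenvectorBasis.orthonormal.ne_zero i
      intro hcon; apply h; ext j; exact congrFun hcon j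
    have hv : gainAdj cycle4 φ *ᵥ v = (μ i : ℂ) • v := by
      rw [hvdef, hg.isHermitian.mulVec_eigenvectorBasis i]
      ext j; simp [Complex.real_smul, hμdef]
    rw [hAeq] at hv
    have hv2 : (!![2, 0, a + (starRingEnd ℂ) b, 0; 0, 2, 0, a + (starRingEnd ℂ) b;
        (starRingEnd ℂ) a + b, 0, 2, 0; 0, (starRingEnd ℂ) a + b, 0, 2]
          : Matrix (Fin 4) (Fin 4) ℂ) *ᵥ v = ((μ i : ℂ) ^ 2) • v := by
      rw [← hM2, ← Matrix.mulVec_mulVec, hv, Matrix.mulVec_smul, hv, smul_smul, ← pow_two]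
    have h1 : ((!![2, 0, a + (starRingEnd ℂ) b, 0; 0, 2, 0, a + (starRingEnd ℂ) b;
        (starRingEnd ℂ) a + b, 0, 2, 0; 0, (starRingEnd ℂ) a + b, 0, 2]
          : Matrix (Fin 4) (Fin 4) ℂ) *
        !![2, 0, a + (starRingEnd ℂ) b, 0; 0, 2, 0, a + (starRingEnd ℂ) b;
        (starRingEnd ℂ) a + b, 0, 2, 0; 0, (starRingEnd ℂ) a + b, 0, 2]) *ᵥ v
          = ((μ i : ℂ) ^ 4) • v := by
      rw [← Matrix.mulVec_mulVec, hv2, Matrix.mulVec_smul, hv2, smul_smul]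
      norm_num; ring_nf
    rw [hM4, Matrix.sub_mulVec, Matrix.smul_mulVec, Matrix.smul_mulVec,
      Matrix.one_mulVec, hv2, smul_smul] at h1
    have h0 : ((μ i : ℂ) ^ 4 - 4 * (μ i : ℂ) ^ 2 + ((4 : ℂ) - (2 + 2 * (x : ℂ)))) • v = 0 := by
      rw [add_smul, sub_smul, ← h1]
      abel
    have hsc : (μ i : ℂ) ^ 4 - 4 * (μ i : ℂ) ^ 2 + ((4 : ℂ) - (2 + 2 * (x : ℂ))) = 0 :=
      (smul_eq_zero.mp h0).resolve_right hv0
    have hrealeq : μ i ^ 4 - 4 * μ i ^ 2 + (4 - (2 + 2 * x)) = 0 := by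
      exact_mod_cast hsc
    have hfact : (μ i ^ 2 - 2 - s) * (μ i ^ 2 - 2 + s) = 0 := by
      linear_combination hrealeq - hs2
    rcases mul_eq_zero.mp hfact with h | h
    · left; linarith
    · right; linarith
  -- sum of squares of eigenvalues is 8
  have htR : μ 0 ^ 2 + μ 1 ^ 2 + μ 2 ^ 2 + μ 3 ^ 2 = 8 := by
    have hsp := hg.isHermitian.spectral_theorem
    have hUU : star ((hg.isHermitian.eigenvectorUnitary : Matrix (Fin 4) (Fin 4) ℂ)) *
        (hg.isHermitian.eigenvectorUnitary : Matrix (Fin 4) (Fin 4) ℂ) = 1 :=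
      Matrix.mem_unitaryGroup_iff'.mp (hg.isHermitian.eigenvectorUnitary).2
    set U : Matrix (Fin 4) (Fin 4) ℂ :=
      (hg.isHermitian.eigenvectorUnitary : Matrix (Fin 4) (Fin 4) ℂ) with hUdef
    set D : Matrix (Fin 4) (Fin 4) ℂ :=
      Matrix.diagonal (RCLike.ofReal ∘ hg.isHermitian.eigenvalues) with hDdef
    have h2 : gainAdj cycle4 φ * gainAdj cycle4 φ = U * (D * (D * star U)) := by
      conv_lhs => rw [hsp, Unitary.conjStarAlgAut_apply]
      simp only [Matrix.mul_assoc]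
      rw [show star U * (U * (D * star U)) = D * star U by
        rw [← Matrix.mul_assoc, hUU, Matrix.one_mul]]
    have h3 : Matrix.trace (gainAdj cycle4 φ * gainAdj cycle4 φ) = Matrix.trace (D * D) := by
      rw [h2, Matrix.trace_mul_comm]
      simp only [Matrix.mul_assoc]
      rw [show star U * U = 1 from hUU]
      rw [Matrix.mul_one]
    have h4 : Matrix.trace (D * D) = ∑ i, ((μ i : ℂ)) ^ 2 := by
      rw [hDdef, Matrix.diagonal_mul_diagonal, Matrix.trace_diagonal]
      refine Finset.sum_congr rfl fun i _ => ?_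
      simp [hμdef, pow_two]
    have h5 : Matrix.trace (gainAdj cycle4 φ * gainAdj cycle4 φ) = 8 := by
      rw [hAeq, hM2, Matrix.trace]
      simp [Fin.sum_univ_four, Matrix.diag]
      norm_num
    have hC : ∑ i, ((μ i : ℂ)) ^ 2 = 8 := by rw [← h4, ← h3, h5]
    rw [Fin.sum_univ_four] at hC
    exact_mod_cast hC
  clear hM2 hM4 hAeq hcd hre haa h10 h21 h32 h03 adj01 adj12 adj23 adj30
  -- the energy
  have hE : gainEnergy cycle4 φ hg =
      Real.sqrt (μ 0 ^ 2) + Real.sqrt (μ 1 ^ 2) + Real.sqrt (μ 2 ^ 2) + Real.sqrt (μ 3 ^ 2) := by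
    rw [show gainEnergy cycle4 φ hg = ∑ i, |hg.isHermitian.eigenvalues i| from rfl,
      Fin.sum_univ_four]
    simp only [← hμdef, Real.sqrt_sq_eq_abs]
  have hEform : gainEnergy cycle4 φ hg = 2 * Real.sqrt (2 + s) + 2 * Real.sqrt (2 - s) := by
    rcases key 0 with h0 | h0 <;> rcases key 1 with h1 | h1 <;>
      rcases key 2 with h2 | h2 <;> rcases key 3 with h3 | h3 <;>
      rw [hE, h0, h1, h2, h3] <;> rw [h0, h1, h2, h3] at htR <;>
      first
        | ring1
        | (have hs00 : s = 0 := by linarith only [htR, hs0]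
           rw [hs00]
           norm_num
           try ring)
  clear hE key htR
  clear hμdef μ
  have hp2 : Real.sqrt (2 + s) ^ 2 = 2 + s := Real.sq_sqrt (by linarith)
  have hq2 : Real.sqrt (2 - s) ^ 2 = 2 - s := Real.sq_sqrt (by linarith)
  have hp0 : 0 ≤ Real.sqrt (2 + s) := Real.sqrt_nonneg _
  have hq0 : 0 ≤ Real.sqrt (2 - s) := Real.sqrt_nonneg _
  obtain ⟨hge, heq1, heq2⟩ :=
    aux_real s (Real.sqrt (2 + s)) (Real.sqrt (2 - s)) hs0 hp2 hq2 hp0 hq0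
  refine ⟨hEform, ?_, ?_, ?_⟩
  · rw [hEform]; exact hge
  · constructor
    · intro hE4
      rw [hEform] at hE4
      have hs22 := heq1 hE4
      rw [hs22] at hs2
      norm_num at hs2
      linarith
    · intro hx1'
      rw [hEform]
      apply heq2
      rw [hsdef, hx1']
      rw [show (2:ℝ) + 2 * 1 = (2:ℝ) ^ 2 by norm_num,
        Real.sqrt_sq (by norm_num : (0:ℝ) ≤ 2)]
  · constructor
    · intro hx1'
      have hre1 : (a * b).re = 1 := by rw [← hxdef]; exact hx1'
      have hns : Complex.normSq (a * b) = 1 := by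
        rw [← Complex.sq_norm, hab]; norm_num
      rw [Complex.normSq_apply, hre1] at hns
      have him : (a * b).im = 0 := by
        have h' : (a * b).im * (a * b).im = 0 := by linarith
        exact mul_self_eq_zero.mp h'
      have hab1 : a * b = 1 := by
        apply Complex.ext
        · rw [hre1, Complex.one_re]
        · rw [him, Complex.one_im]
      calc a = a * (b * (starRingEnd ℂ) b) := by rw [hbb, mul_one]
        _ = (a * b) * (starRingEnd ℂ) b := by ring
        _ = (starRingEnd ℂ) b := by rw [hab1, one_mul]
    · intro habc
      have hab1 : a * b = 1 := by rw [habc, mul_comm]; exact hbb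
      rw [hxdef, hab1, Complex.one_re]
end
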